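/- arXiv:1503.05370 — 4 statements merged into one kernel-verified Lean document; each statement's English description precedes it below -/
import Mathlib

section
/- Let X hold, let the process be Markov with respect to its natural filtration, let q > 0 and assume ∫_{ℝ^d} |y|^q Q(y) dy < ∞. Then for all 0 ≤ r < s ≤ T and every x ∈ ℝ^d, E_x |X_s − X_r|^q ≤ C_T (s − r)^{q/α} ∫_{ℝ^d} Q(y) |y|^q dy. -/
open MeasureTheory
open scoped ENNReal

lemma lintegral_comp_smul_sub {d : ℕ} (f : EuclideanSpace ℝ (Fin d) → ℝ≥0∞)
    (hf : Measurable f) {c : ℝ} (hc : c ≠ 0) (z : EuclideanSpace ℝ (Fin d)) :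
    ∫⁻ w, f (c • (z - w)) = ENNReal.ofReal |(c ^ d)⁻¹| * ∫⁻ u, f u := by
  have h1 : MeasurePreserving (fun w : EuclideanSpace ℝ (Fin d) => z - w) volume volume :=
    Measure.measurePreserving_sub_left volume z
  have h2 : ∫⁻ w, f (c • (z - w)) = ∫⁻ u, f (c • u) :=
    h1.lintegral_comp (hf.comp (measurable_const_smul c))
  rw [h2, ← lintegral_map hf (measurable_const_smul c),
    Measure.map_addHaar_smul volume hc, lintegral_smul_measure,
    finrank_euclideanSpace_fin, smul_eq_mul]

def natFiltration {Ω : Type} [MeasurableSpace Ω] {d : ℕ}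
    (X : ℝ → Ω → EuclideanSpace ℝ (Fin d)) (u : ℝ) : MeasurableSpace Ω :=
  ⨆ s ∈ Set.Iic u, MeasurableSpace.comap (X s) inferInstance

theorem statement_6
    {d : ℕ} {Ω : Type} [MeasurableSpace Ω]
    (X : ℝ → Ω → EuclideanSpace ℝ (Fin d))
    (P : EuclideanSpace ℝ (Fin d) → Measure Ω)
    (hP : ∀ x, IsProbabilityMeasure (P x))
    (hXmeas : Measurable (Function.uncurry X))
    (hX0 : ∀ x, ∀ᵐ ω ∂ P x, X 0 ω = x)
    (T Cst α : ℝ) (hT : 0 < T) (hCst : 0 < Cst) (hα : α ∈ Set.Ioc (0:ℝ) 2)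
    (Q : EuclideanSpace ℝ (Fin d) → ℝ)
    (hQmeas : Measurable Q) (hQnn : ∀ y, 0 ≤ Q y) (hQone : (∫ y, Q y) = 1)
    (pt pt' : ℝ → EuclideanSpace ℝ (Fin d) → EuclideanSpace ℝ (Fin d) → ℝ)
    (hptmeas : Measurable (fun q : ℝ × EuclideanSpace ℝ (Fin d) × EuclideanSpace ℝ (Fin d) => pt q.1 q.2.1 q.2.2))
    (hpt'meas : Measurable (fun q : ℝ × EuclideanSpace ℝ (Fin d) × EuclideanSpace ℝ (Fin d) => pt' q.1 q.2.1 q.2.2))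
    (hptnn : ∀ t x y, 0 < t → 0 ≤ pt t x y)
    (hptderiv : ∀ x y t, 0 < t → HasDerivAt (fun s => pt s x y) (pt' t x y) t)
    (hptbound : ∀ x y t, 0 < t → t ≤ T →
      pt t x y ≤ Cst * t ^ (-(d:ℝ)/α) * Q ((t ^ (-1/α)) • (x - y)))
    (hpt'bound : ∀ x y t, 0 < t → t ≤ T →
      |pt' t x y| ≤ Cst * t ^ (-1 - (d:ℝ)/α) * Q ((t ^ (-1/α)) • (x - y)))
    (hdens : ∀ x t, 0 < t →
      Measure.map (X t) (P x)
        = (volume : Measure (EuclideanSpace ℝ (Fin d))).withDensity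
            (fun y => ENNReal.ofReal (pt t x y)))
    (hMarkov : ∀ (x : EuclideanSpace ℝ (Fin d)) (u v : ℝ),
      ∀ g : EuclideanSpace ℝ (Fin d) → ℝ, Measurable g → (∃ M, ∀ y, |g y| ≤ M) →
      0 ≤ u → 0 < v →
      (P x)[(fun ω => g (X (u + v) ω)) | natFiltration X u]
        =ᵐ[P x] (fun ω => ∫ y, pt v (X u ω) y * g y))
    (q : ℝ) (hq : 0 < q)
    (hQq : Integrable (fun y : EuclideanSpace ℝ (Fin d) => Q y * ‖y‖ ^ q)) :
    ∀ (x : EuclideanSpace ℝ (Fin d)) (r s : ℝ), 0 ≤ r → r < s → s ≤ T →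
      (∫ ω, ‖X s ω - X r ω‖ ^ q ∂ P x)
        ≤ Cst * (s - r) ^ (q / α) * ∫ y, Q y * ‖y‖ ^ q := by
  intro x r s hr hrs hsT
  haveI := hP x
  have hα0 : 0 < α := hα.1
  set t : ℝ := s - r with htdef
  have ht : 0 < t := sub_pos.2 hrs
  have htT : t ≤ T := by simp only [htdef]; linarith
  -- basic measurability
  have hXu : ∀ u, Measurable (X u) := fun u => hXmeas.comp measurable_prodMk_left
  have hXr := hXu r
  have hXs := hXu s
  have hQint : Integrable Q := by
    by_contra h
    rw [integral_undef h] at hQone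
    norm_num at hQone
  -- the scaling constant
  set c : ℝ := t ^ (-1/α) with hcdef
  have hc0 : 0 < c := Real.rpow_pos_of_pos ht _
  have hcinv : c⁻¹ = t ^ (1/α) := by
    rw [hcdef, ← Real.rpow_neg ht.le]
    congr 1
    ring
  have hcpow : |((c : ℝ) ^ d)⁻¹| = t ^ ((d : ℝ)/α) := by
    rw [hcdef, ← Real.rpow_natCast (t ^ (-1/α)) d, ← Real.rpow_mul ht.le,
      ← Real.rpow_neg ht.le, abs_of_pos (Real.rpow_pos_of_pos ht _)]
    ring_nf
  -- measurability of densities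
  have hptzw : Measurable (Function.uncurry fun z w : EuclideanSpace ℝ (Fin d) =>
      ENNReal.ofReal (pt t z w)) :=
    ENNReal.measurable_ofReal.comp (hptmeas.comp (measurable_const.prodMk measurable_id))
  have hptz : ∀ z : EuclideanSpace ℝ (Fin d), Measurable (fun w => pt t z w) := fun z =>
    hptmeas.comp (measurable_const.prodMk (measurable_const.prodMk measurable_id))
  -- the law of X r and the transition kernel
  set ν : Measure (EuclideanSpace ℝ (Fin d)) := (P x).map (X r) with hνdef
  haveI : IsProbabilityMeasure ν := Measure.isProbabilityMeasure_map hXr.aemeasurable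
  set κ : ProbabilityTheory.Kernel (EuclideanSpace ℝ (Fin d)) (EuclideanSpace ℝ (Fin d)) :=
    ProbabilityTheory.Kernel.withDensity
      (ProbabilityTheory.Kernel.const _ (volume : Measure (EuclideanSpace ℝ (Fin d))))
      (fun z w => ENNReal.ofReal (pt t z w)) with hκdef
  have hκapp : ∀ z, κ z
      = (volume : Measure (EuclideanSpace ℝ (Fin d))).withDensity
          (fun w => ENNReal.ofReal (pt t z w)) := by
    intro z
    rw [hκdef, ProbabilityTheory.Kernel.withDensity_apply _ hptzw,
      ProbabilityTheory.Kernel.const_apply]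
  have hκB : ∀ z (B : Set (EuclideanSpace ℝ (Fin d))), MeasurableSet B →
      κ z B = ∫⁻ w in B, ENNReal.ofReal (pt t z w) := by
    intro z B hB
    rw [hκapp z, withDensity_apply _ hB]
  -- uniform bound on the total mass of the kernel
  have hQlint : ∫⁻ u, ENNReal.ofReal (Q u) = 1 := by
    rw [← ofReal_integral_eq_lintegral_ofReal hQint (ae_of_all _ hQnn), hQone,
      ENNReal.ofReal_one]
  have kernel_bound : ∀ z, κ z Set.univ ≤ ENNReal.ofReal Cst := by
    intro z
    rw [hκB z _ MeasurableSet.univ, Measure.restrict_univ]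
    have h1 : ∫⁻ w, ENNReal.ofReal (pt t z w)
        ≤ ∫⁻ w, ENNReal.ofReal (Cst * t ^ (-(d:ℝ)/α)) * ENNReal.ofReal (Q (c • (z - w))) := by
      refine lintegral_mono fun w => ?_
      rw [← ENNReal.ofReal_mul (by positivity)]
      exact ENNReal.ofReal_le_ofReal (hptbound z w t ht htT)
    have hsc : ∫⁻ w, ENNReal.ofReal (Q (c • (z - w)))
        = ENNReal.ofReal (t ^ ((d:ℝ)/α)) * 1 := by
      have h0 := lintegral_comp_smul_sub (fun u => ENNReal.ofReal (Q u))
        (ENNReal.measurable_ofReal.comp hQmeas) (ne_of_gt hc0) z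
      simpa [hcpow, hQlint] using h0
    have h2 : ∫⁻ w, ENNReal.ofReal (Cst * t ^ (-(d:ℝ)/α)) * ENNReal.ofReal (Q (c • (z - w)))
        = ENNReal.ofReal (Cst * t ^ (-(d:ℝ)/α)) * (ENNReal.ofReal (t ^ ((d:ℝ)/α)) * 1) := by
      rw [lintegral_const_mul _ (show Measurable fun w => ENNReal.ofReal (Q (c • (z - w))) from
        (ENNReal.measurable_ofReal.comp hQmeas).comp
        ((measurable_const.sub measurable_id).const_smul c)), hsc]
    refine h1.trans (h2.le.trans ?_)
    rw [mul_one, ← ENNReal.ofReal_mul (by positivity)]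
    have hcomb : t ^ (-(d:ℝ)/α) * t ^ ((d:ℝ)/α) = 1 := by
      rw [← Real.rpow_add ht, neg_div, neg_add_cancel, Real.rpow_zero]
    have heq : Cst * t ^ (-(d:ℝ)/α) * t ^ ((d:ℝ)/α) = Cst := by
      rw [mul_assoc, hcomb, mul_one]
    exact le_of_eq (by rw [heq])
  haveI : ProbabilityTheory.IsFiniteKernel κ :=
    ⟨⟨ENNReal.ofReal Cst, ENNReal.ofReal_lt_top, kernel_bound⟩⟩
  -- the joint law of (X r, X s) is ν ⊗ₘ κ
  have pairMeas : Measurable (fun ω => (X r ω, X s ω)) := hXr.prodMk hXs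
  -- the Markov property at level of rectangle sets
  have hm : natFiltration X r ≤ (inferInstance : MeasurableSpace Ω) :=
    iSup₂_le fun u _ => (hXu u).comap_le
  haveI : SigmaFinite ((P x).trim hm) := (isFiniteMeasure_trim hm).toSigmaFinite
  have hrect : ∀ (A B : Set (EuclideanSpace ℝ (Fin d))), MeasurableSet A → MeasurableSet B →
      P x (X r ⁻¹' A ∩ X s ⁻¹' B) = ∫⁻ ω in X r ⁻¹' A, κ (X r ω) B ∂(P x) := by
    intro A B hA hB
    set g : EuclideanSpace ℝ (Fin d) → ℝ := B.indicator fun _ => 1 with hgdef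
    have hg : Measurable g := measurable_const.indicator hB
    have hgb : ∃ M, ∀ y, |g y| ≤ M := by
      refine ⟨1, fun y => ?_⟩
      by_cases h : y ∈ B <;> simp [hgdef, Set.indicator, h]
    have hrt : r + t = s := by rw [htdef]; ring
    have hM := hMarkov x r t g hg hgb hr ht
    rw [hrt] at hM
    have hgX : (fun ω => g (X s ω)) = (X s ⁻¹' B).indicator (fun _ => (1:ℝ)) := by
      funext ω
      by_cases h : X s ω ∈ B <;> simp [hgdef, Set.indicator, h]
    have hGint : Integrable (fun ω => g (X s ω)) (P x) := by
      rw [hgX]; exact (integrable_const 1).indicator (hXs hB)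
    have hS : MeasurableSet[natFiltration X r] (X r ⁻¹' A) := by
      have h1 : MeasurableSpace.comap (X r) inferInstance ≤ natFiltration X r := by
        refine le_iSup₂ (f := fun u (_ : u ∈ Set.Iic r) =>
          MeasurableSpace.comap (X u) inferInstance) r ?_
        exact Set.mem_Iic.2 le_rfl
      exact h1 _ ⟨A, hA, rfl⟩
    have e1 : ∫ ω in X r ⁻¹' A, ((P x)[(fun ω => g (X s ω))|natFiltration X r]) ω ∂(P x)
        = ∫ ω in X r ⁻¹' A, g (X s ω) ∂(P x) := setIntegral_condExp hm hGint hS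
    have e2 : ∫ ω in X r ⁻¹' A, ((P x)[(fun ω => g (X s ω))|natFiltration X r]) ω ∂(P x)
        = ∫ ω in X r ⁻¹' A, (∫ y, pt t (X r ω) y * g y) ∂(P x) :=
      integral_congr_ae (ae_restrict_of_ae hM)
    have e3 : ∀ z, (∫ y, pt t z y * g y) = (κ z B).toReal := by
      intro z
      have hind : (fun y => pt t z y * g y) = B.indicator (fun y => pt t z y) := by
        funext y
        by_cases h : y ∈ B <;> simp [hgdef, Set.indicator, h]
      rw [hind, integral_indicator hB,
        integral_eq_lintegral_of_nonneg_ae (ae_of_all _ fun y => hptnn t z y ht)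
          (hptz z).aestronglyMeasurable, hκB z B hB]
    have e4 : ∫ ω in X r ⁻¹' A, g (X s ω) ∂(P x)
        = (P x (X r ⁻¹' A ∩ X s ⁻¹' B)).toReal := by
      rw [hgX, setIntegral_indicator (hXs hB), setIntegral_const]
      simp [Measure.real]
    have hbd : ∀ z, κ z B ≤ ENNReal.ofReal Cst := fun z =>
      le_trans (measure_mono (Set.subset_univ B)) (kernel_bound z)
    have hκmeas : Measurable fun ω => κ (X r ω) B :=
      (ProbabilityTheory.Kernel.measurable_coe κ hB).comp hXr
    have hint : Integrable (fun ω => (κ (X r ω) B).toReal) ((P x).restrict (X r ⁻¹' A)) := by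
      refine ⟨hκmeas.ennreal_toReal.aestronglyMeasurable, ?_⟩
      refine HasFiniteIntegral.of_bounded (C := Cst) (ae_of_all _ fun ω => ?_)
      rw [Real.norm_eq_abs, abs_of_nonneg ENNReal.toReal_nonneg]
      exact ENNReal.toReal_le_of_le_ofReal hCst.le (hbd _)
    have e5 : ∫⁻ ω in X r ⁻¹' A, κ (X r ω) B ∂(P x)
        = ENNReal.ofReal (∫ ω in X r ⁻¹' A, (κ (X r ω) B).toReal ∂(P x)) := by
      rw [ofReal_integral_eq_lintegral_ofReal hint (ae_of_all _ fun ω => ENNReal.toReal_nonneg)]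
      exact lintegral_congr fun ω => (ENNReal.ofReal_toReal
        (ne_of_lt (lt_of_le_of_lt (hbd _) ENNReal.ofReal_lt_top))).symm
    have e6 : ∫ ω in X r ⁻¹' A, (∫ y, pt t (X r ω) y * g y) ∂(P x)
        = ∫ ω in X r ⁻¹' A, (κ (X r ω) B).toReal ∂(P x) := by
      exact integral_congr_ae (ae_of_all _ fun ω => e3 (X r ω))
    rw [e5, ← e6, ← e2, e1, e4, ENNReal.ofReal_toReal (measure_ne_top _ _)]
  have hmap : (P x).map (fun ω => (X r ω, X s ω)) = ν.compProd κ := by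
    haveI : IsProbabilityMeasure ((P x).map (fun ω => (X r ω, X s ω))) :=
      Measure.isProbabilityMeasure_map pairMeas.aemeasurable
    have hrect2 : ∀ (A B : Set (EuclideanSpace ℝ (Fin d))), MeasurableSet A → MeasurableSet B →
        (P x).map (fun ω => (X r ω, X s ω)) (A ×ˢ B) = (ν.compProd κ) (A ×ˢ B) := by
      intro A B hA hB
      rw [Measure.map_apply pairMeas (hA.prod hB), Measure.compProd_apply_prod hA hB,
        hνdef, setLIntegral_map (f := fun z => κ z B) hA
          (ProbabilityTheory.Kernel.measurable_coe κ hB) hXr]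
      have hpre : (fun ω => (X r ω, X s ω)) ⁻¹' (A ×ˢ B) = X r ⁻¹' A ∩ X s ⁻¹' B := by
        ext ω; simp [Set.mem_prod]
      rw [hpre]
      exact hrect A B hA hB
    refine ext_of_generate_finite _ generateFrom_prod.symm
      isPiSystem_prod ?_ ?_
    · rintro u ⟨A, hA, B, hB, rfl⟩
      exact hrect2 A B hA hB
    · rw [← Set.univ_prod_univ]
      exact hrect2 _ _ MeasurableSet.univ MeasurableSet.univ
  -- the target integral quantities
  set I : ℝ := ∫ y, Q y * ‖y‖ ^ q with hIdef
  have hQqnn : ∀ y : EuclideanSpace ℝ (Fin d), 0 ≤ Q y * ‖y‖ ^ q := fun y =>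
    mul_nonneg (hQnn y) (Real.rpow_nonneg (norm_nonneg y) q)
  have hI0 : 0 ≤ I := integral_nonneg hQqnn
  have hQqmeas : Measurable fun y : EuclideanSpace ℝ (Fin d) => Q y * ‖y‖ ^ q :=
    hQmeas.mul (measurable_norm.pow measurable_const)
  have hIlint : ∫⁻ u, ENNReal.ofReal (Q u * ‖u‖ ^ q) = ENNReal.ofReal I :=
    (ofReal_integral_eq_lintegral_ofReal hQq (ae_of_all _ hQqnn)).symm
  have hcomb : t ^ (-(d:ℝ)/α) * t ^ ((d:ℝ)/α) = 1 := by
    rw [← Real.rpow_add ht, neg_div, neg_add_cancel, Real.rpow_zero]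
  -- the inner bound
  have key_inner : ∀ z : EuclideanSpace ℝ (Fin d),
      ∫⁻ w, ENNReal.ofReal (pt t z w) * ENNReal.ofReal (‖w - z‖ ^ q) ∂volume
        ≤ ENNReal.ofReal (Cst * t ^ (q/α) * I) := by
    intro z
    set fI : EuclideanSpace ℝ (Fin d) → ℝ≥0∞ :=
      fun u => ENNReal.ofReal (Q u) * ENNReal.ofReal (‖(t ^ (1/α) : ℝ) • u‖ ^ q) with hfIdef
    have hfImeas : Measurable fI :=
      (ENNReal.measurable_ofReal.comp hQmeas).mul
        (ENNReal.measurable_ofReal.comp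
          (((measurable_const_smul (t ^ (1/α) : ℝ)).norm).pow measurable_const))
    have hptw : ∀ w, ENNReal.ofReal (pt t z w) * ENNReal.ofReal (‖w - z‖ ^ q)
        ≤ ENNReal.ofReal (Cst * t ^ (-(d:ℝ)/α)) * fI (c • (z - w)) := by
      intro w
      have hsm : (t ^ (1/α) : ℝ) • (c • (z - w)) = z - w := by
        rw [smul_smul, hcdef]
        have h1 : t ^ (1/α) * t ^ (-1/α) = 1 := by
          rw [← Real.rpow_add ht]
          have : (1/α) + (-1/α) = 0 := by ring
          rw [this, Real.rpow_zero]
        rw [h1, one_smul]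
      have h1 : fI (c • (z - w))
          = ENNReal.ofReal (Q (c • (z - w))) * ENNReal.ofReal (‖w - z‖ ^ q) := by
        rw [hfIdef]
        dsimp only
        rw [hsm, norm_sub_rev]
      have h2 : ENNReal.ofReal (pt t z w)
          ≤ ENNReal.ofReal (Cst * t ^ (-(d:ℝ)/α)) * ENNReal.ofReal (Q (c • (z - w))) := by
        rw [← ENNReal.ofReal_mul (by positivity)]
        exact ENNReal.ofReal_le_ofReal (hptbound z w t ht htT)
      rw [h1, ← mul_assoc]
      exact mul_le_mul_left h2 _
    have hfIint : ∫⁻ u, fI u = ENNReal.ofReal (t ^ (q/α)) * ENNReal.ofReal I := by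
      have hptw2 : ∀ u, fI u
          = ENNReal.ofReal (t ^ (q/α)) * ENNReal.ofReal (Q u * ‖u‖ ^ q) := by
        intro u
        have hpow : ((t ^ (1/α) : ℝ)) ^ q = t ^ (q/α) := by
          rw [← Real.rpow_mul ht.le]
          congr 1
          ring
        rw [hfIdef]
        dsimp only
        rw [norm_smul, Real.norm_eq_abs, abs_of_pos (Real.rpow_pos_of_pos ht _),
          Real.mul_rpow (Real.rpow_nonneg ht.le _) (norm_nonneg u), hpow,
          ENNReal.ofReal_mul (Real.rpow_nonneg ht.le _), ENNReal.ofReal_mul (hQnn u)]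
        ring
      rw [lintegral_congr hptw2,
        lintegral_const_mul _ (show Measurable fun u : EuclideanSpace ℝ (Fin d) =>
          ENNReal.ofReal (Q u * ‖u‖ ^ q) from ENNReal.measurable_ofReal.comp hQqmeas), hIlint]
    calc ∫⁻ w, ENNReal.ofReal (pt t z w) * ENNReal.ofReal (‖w - z‖ ^ q) ∂volume
        ≤ ∫⁻ w, ENNReal.ofReal (Cst * t ^ (-(d:ℝ)/α)) * fI (c • (z - w)) ∂volume :=
          lintegral_mono hptw
      _ = ENNReal.ofReal (Cst * t ^ (-(d:ℝ)/α)) * ∫⁻ w, fI (c • (z - w)) ∂volume :=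
          lintegral_const_mul _
            (hfImeas.comp ((measurable_const.sub measurable_id).const_smul c))
      _ = ENNReal.ofReal (Cst * t ^ (-(d:ℝ)/α))
            * (ENNReal.ofReal (t ^ ((d:ℝ)/α)) * (ENNReal.ofReal (t ^ (q/α)) * ENNReal.ofReal I)) := by
          rw [lintegral_comp_smul_sub fI hfImeas (ne_of_gt hc0) z, hcpow, hfIint]
      _ = ENNReal.ofReal (Cst * t ^ (q/α) * I) := by
          rw [← ENNReal.ofReal_mul (Real.rpow_nonneg ht.le _),
            ← ENNReal.ofReal_mul (Real.rpow_nonneg ht.le _),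
            ← ENNReal.ofReal_mul (by positivity)]
          congr 1
          calc Cst * t ^ (-(d:ℝ)/α) * (t ^ ((d:ℝ)/α) * (t ^ (q/α) * I))
              = (t ^ (-(d:ℝ)/α) * t ^ ((d:ℝ)/α)) * (Cst * (t ^ (q/α) * I)) := by ring
            _ = Cst * t ^ (q/α) * I := by rw [hcomb, one_mul]; ring
  -- conclusion
  have hFmeas : Measurable fun p : EuclideanSpace ℝ (Fin d) × EuclideanSpace ℝ (Fin d) =>
      ENNReal.ofReal (‖p.2 - p.1‖ ^ q) :=
    ENNReal.measurable_ofReal.comp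
      (((measurable_snd.sub measurable_fst).norm).pow measurable_const)
  have hLmeas : Measurable fun ω => ‖X s ω - X r ω‖ ^ q :=
    ((hXs.sub hXr).norm).pow measurable_const
  have hLnn : 0 ≤ᵐ[P x] fun ω => ‖X s ω - X r ω‖ ^ q :=
    ae_of_all _ fun ω => Real.rpow_nonneg (norm_nonneg _) q
  have hstep1 : ∫⁻ ω, ENNReal.ofReal (‖X s ω - X r ω‖ ^ q) ∂(P x)
      = ∫⁻ p, ENNReal.ofReal (‖p.2 - p.1‖ ^ q) ∂((P x).map (fun ω => (X r ω, X s ω))) :=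
    (lintegral_map hFmeas pairMeas).symm
  have hstep2 : ∫⁻ p, ENNReal.ofReal (‖p.2 - p.1‖ ^ q) ∂((P x).map (fun ω => (X r ω, X s ω)))
      = ∫⁻ z, ∫⁻ w, ENNReal.ofReal (pt t z w) * ENNReal.ofReal (‖w - z‖ ^ q) ∂volume ∂ν := by
    rw [hmap, Measure.lintegral_compProd hFmeas]
    refine lintegral_congr fun z => ?_
    rw [hκapp z]
    exact lintegral_withDensity_eq_lintegral_mul volume
      (f := fun w => ENNReal.ofReal (pt t z w))
      (ENNReal.measurable_ofReal.comp (hptz z))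
      (g := fun w => ENNReal.ofReal (‖w - z‖ ^ q))
      (ENNReal.measurable_ofReal.comp (((measurable_id.sub measurable_const).norm).pow
        measurable_const))
  have hfinal : ∫⁻ ω, ENNReal.ofReal (‖X s ω - X r ω‖ ^ q) ∂(P x)
      ≤ ENNReal.ofReal (Cst * t ^ (q/α) * I) := by
    rw [hstep1, hstep2]
    calc ∫⁻ z, ∫⁻ w, ENNReal.ofReal (pt t z w) * ENNReal.ofReal (‖w - z‖ ^ q) ∂volume ∂ν
        ≤ ∫⁻ _, ENNReal.ofReal (Cst * t ^ (q/α) * I) ∂ν := lintegral_mono key_inner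
      _ = ENNReal.ofReal (Cst * t ^ (q/α) * I) := by
          rw [lintegral_const, measure_univ, mul_one]
  rw [integral_eq_lintegral_of_nonneg_ae hLnn hLmeas.aestronglyMeasurable]
  exact ENNReal.toReal_le_of_le_ofReal
    (mul_nonneg (mul_nonneg hCst.le (Real.rpow_nonneg ht.le _)) hI0) hfinal
end

section
/- Let X and H2 hold, let the process be Markov with respect to its natural filtration, let p ≥ 1 and assume ∫_{ℝ^d} |y|^{γp} Q(y) dy < ∞. Then for all 0 ≤ r < s ≤ T and every x ∈ ℝ^d, E_x |h(X_s) − h(X_r)|^p ≤ ‖h‖_γ^p C_T (s − r)^{γp/α} ∫_{ℝ^d} Q(y) |y|^{γp} dy. -/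
open MeasureTheory
open scoped ENNReal NNReal

theorem statement_7
    {d : ℕ} {Ω : Type} [MeasurableSpace Ω]
    (X : ℝ → Ω → EuclideanSpace ℝ (Fin d))
    (P : EuclideanSpace ℝ (Fin d) → Measure Ω)
    (hP : ∀ x, IsProbabilityMeasure (P x))
    (hXmeas : Measurable (Function.uncurry X))
    (hX0 : ∀ x, ∀ᵐ ω ∂ P x, X 0 ω = x)
    (T Cst α : ℝ) (hT : 0 < T) (hCst : 0 < Cst) (hα : α ∈ Set.Ioc (0:ℝ) 2)
    (Q : EuclideanSpace ℝ (Fin d) → ℝ)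
    (hQmeas : Measurable Q) (hQnn : ∀ y, 0 ≤ Q y) (hQone : (∫ y, Q y) = 1)
    (pt pt' : ℝ → EuclideanSpace ℝ (Fin d) → EuclideanSpace ℝ (Fin d) → ℝ)
    (hptmeas : Measurable (fun q : ℝ × EuclideanSpace ℝ (Fin d) × EuclideanSpace ℝ (Fin d) => pt q.1 q.2.1 q.2.2))
    (hpt'meas : Measurable (fun q : ℝ × EuclideanSpace ℝ (Fin d) × EuclideanSpace ℝ (Fin d) => pt' q.1 q.2.1 q.2.2))
    (hptnn : ∀ t x y, 0 < t → 0 ≤ pt t x y)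
    (hptderiv : ∀ x y t, 0 < t → HasDerivAt (fun s => pt s x y) (pt' t x y) t)
    (hptbound : ∀ x y t, 0 < t → t ≤ T →
      pt t x y ≤ Cst * t ^ (-(d:ℝ)/α) * Q ((t ^ (-1/α)) • (x - y)))
    (hpt'bound : ∀ x y t, 0 < t → t ≤ T →
      |pt' t x y| ≤ Cst * t ^ (-1 - (d:ℝ)/α) * Q ((t ^ (-1/α)) • (x - y)))
    (hdens : ∀ x t, 0 < t →
      Measure.map (X t) (P x)
        = (volume : Measure (EuclideanSpace ℝ (Fin d))).withDensity
            (fun y => ENNReal.ofReal (pt t x y)))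
    (hMarkov : ∀ (x : EuclideanSpace ℝ (Fin d)) (u v : ℝ),
      ∀ g : EuclideanSpace ℝ (Fin d) → ℝ, Measurable g → (∃ M, ∀ y, |g y| ≤ M) →
      0 ≤ u → 0 < v →
      (P x)[(fun ω => g (X (u + v) ω)) | natFiltration X u]
        =ᵐ[P x] (fun ω => ∫ y, pt v (X u ω) y * g y))
    (h : EuclideanSpace ℝ (Fin d) → ℝ) (hhmeas : Measurable h)
    (γ : ℝ) (hγ : γ ∈ Set.Ioc (0:ℝ) 1)
    (Hγ : ℝ) (hHγ0 : 0 ≤ Hγ) (hHγ : ∀ a b, |h a - h b| ≤ Hγ * ‖a - b‖ ^ γ)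
    (p : ℝ) (hp : 1 ≤ p)
    (hQγp : Integrable (fun y : EuclideanSpace ℝ (Fin d) => Q y * ‖y‖ ^ (γ * p))) :
    ∀ (x : EuclideanSpace ℝ (Fin d)) (r s : ℝ), 0 ≤ r → r < s → s ≤ T →
      (∫ ω, |h (X s ω) - h (X r ω)| ^ p ∂ P x)
        ≤ Hγ ^ p * Cst * (s - r) ^ (γ * p / α) * ∫ y, Q y * ‖y‖ ^ (γ * p) := by
  classical
  intro x r s hr hrs hsT
  have hα0 : 0 < α := hα.1
  haveI := hP x
  set μ : Measure Ω := P x with hμdef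
  -- basic measurability facts
  have hXt : ∀ u : ℝ, Measurable (X u) := fun u => by
    exact hXmeas.comp measurable_prodMk_left
  have hptm1 : ∀ u : ℝ, Measurable (fun q : EuclideanSpace ℝ (Fin d) × EuclideanSpace ℝ (Fin d) => pt u q.1 q.2) := fun u => by
    exact hptmeas.comp (measurable_const.prodMk measurable_id)
  have hptm : ∀ (u : ℝ) (z : EuclideanSpace ℝ (Fin d)), Measurable (fun y : EuclideanSpace ℝ (Fin d) => pt u z y) := fun u z => by
    exact (hptm1 u).comp (measurable_const.prodMk measurable_id)
  have hOf : ∀ (u : ℝ) (z : EuclideanSpace ℝ (Fin d)),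
      Measurable fun y : EuclideanSpace ℝ (Fin d) => ENNReal.ofReal (pt u z y) :=
    fun u z => ENNReal.measurable_ofReal.comp (hptm u z)
  have hp0 : (0:ℝ) ≤ p := le_trans zero_le_one hp
  have hγp0 : 0 ≤ γ * p := mul_nonneg hγ.1.le hp0
  have hnormmeas : Measurable (fun y : EuclideanSpace ℝ (Fin d) => ‖y‖ ^ (γ * p)) :=
    (Real.continuous_rpow_const hγp0).measurable.comp measurable_norm
  have hgmeas : Measurable (fun w : EuclideanSpace ℝ (Fin d) => ENNReal.ofReal (Q w * ‖w‖ ^ (γ * p))) :=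
    ENNReal.measurable_ofReal.comp (hQmeas.mul hnormmeas)
  -- total mass of the kernels
  have hmass : ∀ (z : EuclideanSpace ℝ (Fin d)) (u : ℝ), 0 < u →
      (∫⁻ y, ENNReal.ofReal (pt u z y)) = 1 := by
    intro z u hu
    have h1 : (Measure.map (X u) (P z)) Set.univ = 1 := by
      haveI := hP z
      rw [Measure.map_apply (hXt u) MeasurableSet.univ]
      simp
    rw [hdens z u hu] at h1
    simpa [withDensity_apply _ MeasurableSet.univ] using h1
  have hptInt : ∀ (z : EuclideanSpace ℝ (Fin d)) (u : ℝ), 0 < u → Integrable (fun y => pt u z y) := by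
    intro z u hu
    refine ⟨(hptm u z).aestronglyMeasurable, ?_⟩
    rw [hasFiniteIntegral_iff_ofReal (Filter.Eventually.of_forall fun y => hptnn u z y hu)]
    rw [hmass z u hu]
    exact ENNReal.one_lt_top
  set I : ℝ := ∫ y, Q y * ‖y‖ ^ (γ * p) with hI
  have hI0 : 0 ≤ I :=
    integral_nonneg fun y => mul_nonneg (hQnn y) (Real.rpow_nonneg (norm_nonneg y) _)
  have hJ : (∫⁻ y, ENNReal.ofReal (Q y * ‖y‖ ^ (γ * p))) = ENNReal.ofReal I :=
    (ofReal_integral_eq_lintegral_ofReal hQγp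
      (Filter.Eventually.of_forall fun y =>
        mul_nonneg (hQnn y) (Real.rpow_nonneg (norm_nonneg y) _))).symm
  -- the key inner estimate
  have key : ∀ (z : EuclideanSpace ℝ (Fin d)) (u : ℝ), 0 < u → u ≤ T →
      (∫⁻ y, ENNReal.ofReal (pt u z y) * ENNReal.ofReal (‖y - z‖ ^ (γ * p)))
        ≤ ENNReal.ofReal (Cst * u ^ (γ * p / α) * I) := by
    intro z u hu huT
    set c : ℝ := u ^ (-1/α) with hc
    have hc0 : 0 < c := Real.rpow_pos_of_pos hu _
    have hcmul : u ^ (1/α) * c = 1 := by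
      have h0 : 1/α + -1/α = 0 := by ring
      rw [hc, ← Real.rpow_add hu, h0, Real.rpow_zero]
    have hC1 : 0 ≤ Cst * u ^ (-(d:ℝ)/α) * u ^ (γ * p / α) :=
      mul_nonneg (mul_nonneg hCst.le (Real.rpow_nonneg hu.le _)) (Real.rpow_nonneg hu.le _)
    -- pointwise bound
    have hpoint : ∀ y : EuclideanSpace ℝ (Fin d), pt u z y * ‖y - z‖ ^ (γ * p)
        ≤ (Cst * u ^ (-(d:ℝ)/α) * u ^ (γ * p / α)) *
          (Q (c • (z - y)) * ‖c • (z - y)‖ ^ (γ * p)) := by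
      intro y
      have hnorm : ‖y - z‖ = u ^ (1/α) * ‖c • (z - y)‖ := by
        rw [norm_smul, Real.norm_eq_abs, abs_of_pos hc0, norm_sub_rev z y, ← mul_assoc,
          hcmul, one_mul]
      have h1 : ‖y - z‖ ^ (γ * p) = u ^ (γ * p / α) * ‖c • (z - y)‖ ^ (γ * p) := by
        rw [hnorm, Real.mul_rpow (Real.rpow_nonneg hu.le _) (norm_nonneg _),
          ← Real.rpow_mul hu.le]
        congr 2
        ring
      calc pt u z y * ‖y - z‖ ^ (γ * p)
          ≤ (Cst * u ^ (-(d:ℝ)/α) * Q (c • (z - y))) * ‖y - z‖ ^ (γ * p) :=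
            mul_le_mul_of_nonneg_right (hptbound z y u hu huT)
              (Real.rpow_nonneg (norm_nonneg _) _)
        _ = (Cst * u ^ (-(d:ℝ)/α) * u ^ (γ * p / α)) *
              (Q (c • (z - y)) * ‖c • (z - y)‖ ^ (γ * p)) := by
            rw [h1]; ring
    have hcompmeas : Measurable fun y : EuclideanSpace ℝ (Fin d) =>
        ENNReal.ofReal (Q (c • (z - y)) * ‖c • (z - y)‖ ^ (γ * p)) :=
      hgmeas.comp ((measurable_const.sub measurable_id).const_smul c)
    -- compute the transformed integral
    have hsub : (∫⁻ y : EuclideanSpace ℝ (Fin d), ENNReal.ofReal (Q (c • (z - y)) * ‖c • (z - y)‖ ^ (γ * p)))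
        = ∫⁻ w : EuclideanSpace ℝ (Fin d), ENNReal.ofReal (Q (c • w) * ‖c • w‖ ^ (γ * p)) := by
      exact (Measure.measurePreserving_sub_left volume z).lintegral_comp
        (hgmeas.comp (measurable_id.const_smul c))
    have hsmul : (∫⁻ w : EuclideanSpace ℝ (Fin d), ENNReal.ofReal (Q (c • w) * ‖c • w‖ ^ (γ * p)))
        = ENNReal.ofReal (u ^ ((d:ℝ)/α)) * ENNReal.ofReal I := by
      have e1 : (∫⁻ w : EuclideanSpace ℝ (Fin d), ENNReal.ofReal (Q (c • w) * ‖c • w‖ ^ (γ * p)))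
          = ∫⁻ w, ENNReal.ofReal (Q w * ‖w‖ ^ (γ * p))
              ∂(Measure.map (fun w : EuclideanSpace ℝ (Fin d) => c • w) volume) :=
        (lintegral_map hgmeas (measurable_id.const_smul c)).symm
      rw [e1, Measure.map_addHaar_smul volume (ne_of_gt hc0), lintegral_smul_measure, hJ]
      congr 2
      have hfr : Module.finrank ℝ (EuclideanSpace ℝ (Fin d)) = d := finrank_euclideanSpace_fin
      rw [hfr]
      have hcd : c ^ (d : ℕ) = u ^ (-((d:ℝ)/α)) := by
        rw [← Real.rpow_natCast c d, hc, ← Real.rpow_mul hu.le]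
        congr 1
        ring
      rw [hcd, ← Real.rpow_neg hu.le, neg_neg,
        abs_of_pos (Real.rpow_pos_of_pos hu _)]
    calc (∫⁻ y, ENNReal.ofReal (pt u z y) * ENNReal.ofReal (‖y - z‖ ^ (γ * p)))
        = ∫⁻ y, ENNReal.ofReal (pt u z y * ‖y - z‖ ^ (γ * p)) :=
          lintegral_congr fun y => (ENNReal.ofReal_mul (hptnn u z y hu)).symm
      _ ≤ ∫⁻ y, ENNReal.ofReal ((Cst * u ^ (-(d:ℝ)/α) * u ^ (γ * p / α)) *
            (Q (c • (z - y)) * ‖c • (z - y)‖ ^ (γ * p))) :=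
          lintegral_mono fun y => ENNReal.ofReal_le_ofReal (hpoint y)
      _ = ENNReal.ofReal (Cst * u ^ (-(d:ℝ)/α) * u ^ (γ * p / α)) *
            ∫⁻ y, ENNReal.ofReal (Q (c • (z - y)) * ‖c • (z - y)‖ ^ (γ * p)) := by
          simp_rw [ENNReal.ofReal_mul hC1]
          exact lintegral_const_mul _ hcompmeas
      _ = ENNReal.ofReal (Cst * u ^ (-(d:ℝ)/α) * u ^ (γ * p / α)) *
            (ENNReal.ofReal (u ^ ((d:ℝ)/α)) * ENNReal.ofReal I) := by
          rw [hsub, hsmul]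
      _ = ENNReal.ofReal (Cst * u ^ (γ * p / α) * I) := by
          rw [← ENNReal.ofReal_mul (Real.rpow_nonneg hu.le _), ← ENNReal.ofReal_mul hC1]
          congr 1
          have hud : u ^ (-(d:ℝ)/α) * u ^ ((d:ℝ)/α) = 1 := by
            have h0 : -(d:ℝ)/α + (d:ℝ)/α = 0 := by ring
            rw [← Real.rpow_add hu, h0, Real.rpow_zero]
          calc Cst * u ^ (-(d:ℝ)/α) * u ^ (γ * p / α) * (u ^ ((d:ℝ)/α) * I)
              = (u ^ (-(d:ℝ)/α) * u ^ ((d:ℝ)/α)) * (Cst * u ^ (γ * p / α) * I) := by ring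
            _ = Cst * u ^ (γ * p / α) * I := by rw [hud, one_mul]
  -- main estimate on the moment of the increment
  have hΦmeas : Measurable fun ω => ENNReal.ofReal (‖X s ω - X r ω‖ ^ (γ * p)) :=
    ENNReal.measurable_ofReal.comp (hnormmeas.comp ((hXt s).sub (hXt r)))
  have main : (∫⁻ ω, ENNReal.ofReal (‖X s ω - X r ω‖ ^ (γ * p)) ∂μ)
      ≤ ENNReal.ofReal (Cst * (s - r) ^ (γ * p / α) * I) := by
    rcases eq_or_lt_of_le hr with hr0 | hr0
    · -- case r = 0
      have hs0 : 0 < s := by linarith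
      have hts : s - r = s := by rw [← hr0, sub_zero]
      have e0 : (∫⁻ ω, ENNReal.ofReal (‖X s ω - X r ω‖ ^ (γ * p)) ∂μ)
          = ∫⁻ ω, ENNReal.ofReal (‖X s ω - x‖ ^ (γ * p)) ∂μ := by
        refine lintegral_congr_ae ?_
        filter_upwards [hX0 x] with ω hω
        rw [← hr0, hω]
      have e1 : (∫⁻ ω, ENNReal.ofReal (‖X s ω - x‖ ^ (γ * p)) ∂μ)
          = ∫⁻ y, ENNReal.ofReal (pt s x y) * ENNReal.ofReal (‖y - x‖ ^ (γ * p)) := by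
        have hm2 : Measurable fun y : EuclideanSpace ℝ (Fin d) => ENNReal.ofReal (‖y - x‖ ^ (γ * p)) :=
          ENNReal.measurable_ofReal.comp (hnormmeas.comp (measurable_id.sub measurable_const))
        rw [← lintegral_map hm2 (hXt s), hμdef, hdens x s hs0,
          lintegral_withDensity_eq_lintegral_mul _
            (hOf s x) hm2]
        rfl
      rw [e0, e1, hts]
      exact key x s hs0 hsT
    · -- case 0 < r
      set t : ℝ := s - r with htdef
      have ht : 0 < t := by simp only [htdef]; linarith
      have htT : t ≤ T := by simp only [htdef]; linarith
      -- the pair map and the two measures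
      have hpairm : Measurable fun ω => (X r ω, X s ω) := (hXt r).prodMk (hXt s)
      set ν : Measure (EuclideanSpace ℝ (Fin d) × EuclideanSpace ℝ (Fin d)) := Measure.map (fun ω => (X r ω, X s ω)) μ with hν
      haveI : IsProbabilityMeasure ν := Measure.isProbabilityMeasure_map hpairm.aemeasurable
      set dens : EuclideanSpace ℝ (Fin d) × EuclideanSpace ℝ (Fin d) → ℝ≥0∞ :=
        fun q => ENNReal.ofReal (pt r x q.1) * ENNReal.ofReal (pt t q.1 q.2) with hdensdef
      have hdensm : Measurable dens :=
        ((ENNReal.measurable_ofReal.comp ((hptm r x).comp measurable_fst))).mul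
          (ENNReal.measurable_ofReal.comp (hptm1 t))
      set ρ : Measure (EuclideanSpace ℝ (Fin d) × EuclideanSpace ℝ (Fin d)) :=
        ((volume : Measure (EuclideanSpace ℝ (Fin d))).prod (volume : Measure (EuclideanSpace ℝ (Fin d)))).withDensity dens with hρ
      -- the filtration is below the ambient σ-algebra
      have hm : natFiltration X r ≤ ‹MeasurableSpace Ω› := by
        refine iSup₂_le fun u _ => ?_
        exact measurable_iff_comap_le.mp (hXt u)
      haveI : SigmaFinite (μ.trim hm) := by
        haveI : IsFiniteMeasure (μ.trim hm) := isFiniteMeasure_trim hm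
        infer_instance
      -- rectangles
      have hrect : ∀ A B : Set (EuclideanSpace ℝ (Fin d)), MeasurableSet A → MeasurableSet B →
          ν (A ×ˢ B) = ρ (A ×ˢ B) := by
        intro A B hA hB
        set gB : EuclideanSpace ℝ (Fin d) → ℝ := B.indicator fun _ => (1:ℝ) with hgB
        have hgBmeas : Measurable gB := measurable_const.indicator hB
        have hgBbd : ∃ M, ∀ y, |gB y| ≤ M := by
          refine ⟨1, fun y => ?_⟩
          by_cases hy : y ∈ B <;> simp [hgB, Set.indicator, hy]
        set G : EuclideanSpace ℝ (Fin d) → ℝ := fun z => ∫ y in B, pt t z y with hG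
        have hGmeas : Measurable G :=
          ((hptm1 t).stronglyMeasurable.integral_prod_right').measurable
        have hG0 : ∀ z, 0 ≤ G z := fun z => integral_nonneg fun y => hptnn t z y ht
        have hGtot : ∀ z : EuclideanSpace ℝ (Fin d), (∫ y, pt t z y) = 1 := by
          intro z
          rw [integral_eq_lintegral_of_nonneg_ae
            (Filter.Eventually.of_forall fun y => hptnn t z y ht)
            (hptm t z).aestronglyMeasurable, hmass z t ht]
          simp
        have hG1 : ∀ z, G z ≤ 1 := fun z =>
          (setIntegral_le_integral (hptInt z t ht)
            (Filter.Eventually.of_forall fun y => hptnn t z y ht)).trans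
            (le_of_eq (hGtot z))
        have hGofReal : ∀ z : EuclideanSpace ℝ (Fin d),
            ENNReal.ofReal (G z) = ∫⁻ y in B, ENNReal.ofReal (pt t z y) := by
          intro z
          exact ofReal_integral_eq_lintegral_ofReal (hptInt z t ht).restrict
            (Filter.Eventually.of_forall fun y => hptnn t z y ht)
        -- Markov property
        have hMk := hMarkov x r t gB hgBmeas hgBbd hr (by linarith)
        have hrts : r + t = s := by rw [htdef]; ring
        rw [hrts] at hMk
        set S : Set Ω := X r ⁻¹' A with hSdef
        have hSmeas : MeasurableSet S := (hXt r) hA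
        have hSm : MeasurableSet[natFiltration X r] S := by
          have h2 : MeasurableSpace.comap (X r) inferInstance ≤ natFiltration X r :=
            le_iSup₂ (f := fun (u : ℝ) (_ : u ∈ Set.Iic r) =>
              MeasurableSpace.comap (X u) inferInstance) r (le_refl r)
          exact h2 _ ⟨A, hA, rfl⟩
        have heqind : (fun ω => gB (X s ω)) = (X s ⁻¹' B).indicator fun _ => (1:ℝ) := by
          funext ω; by_cases hω : X s ω ∈ B <;> simp [hgB, Set.indicator, hω]
        have hint : Integrable (fun ω => gB (X s ω)) μ := by
          rw [heqind]
          exact (integrable_const (1:ℝ)).indicator ((hXt s) hB)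
        -- LHS as an integral
        have e0 : ν (A ×ˢ B) = ENNReal.ofReal (∫ ω in S, gB (X s ω) ∂μ) := by
          rw [hν, Measure.map_apply hpairm (hA.prod hB), Set.mk_preimage_prod]
          have : (∫ ω in S, gB (X s ω) ∂μ)
              = (μ (S ∩ X s ⁻¹' B)).toReal := by
            rw [heqind, setIntegral_indicator ((hXt s) hB), setIntegral_const, smul_eq_mul,
              mul_one]
            rfl
          rw [this, ENNReal.ofReal_toReal (measure_ne_top μ _)]
        -- conditional expectation step
        have e1 : (∫ ω in S, gB (X s ω) ∂μ) = ∫ ω in S, G (X r ω) ∂μ := by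
          rw [← setIntegral_condExp hm hint hSm]
          refine setIntegral_congr_ae hSmeas ?_
          filter_upwards [hMk] with ω hω _
          rw [hω]
          have : (fun y => pt t (X r ω) y * gB y) = B.indicator (fun y => pt t (X r ω) y) := by
            funext y; by_cases hy : y ∈ B <;> simp [hgB, Set.indicator, hy]
          rw [this, integral_indicator hB]
        -- transfer to the state space
        have e2 : ENNReal.ofReal (∫ ω in S, G (X r ω) ∂μ)
            = ∫⁻ z in A, ENNReal.ofReal (pt r x z) * ENNReal.ofReal (G z) := by
          have hGXint : Integrable (fun ω => G (X r ω)) μ := by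
            refine ⟨(hGmeas.comp (hXt r)).aestronglyMeasurable, ?_⟩
            refine (hasFiniteIntegral_const (1:ℝ)).mono' ?_
            refine Filter.Eventually.of_forall fun ω => ?_
            rw [Real.norm_eq_abs, abs_of_nonneg (hG0 _)]
            exact hG1 _
          rw [ofReal_integral_eq_lintegral_ofReal hGXint.restrict
            (Filter.Eventually.of_forall fun ω => hG0 _)]
          have hGE : Measurable fun z : EuclideanSpace ℝ (Fin d) => ENNReal.ofReal (G z) :=
            ENNReal.measurable_ofReal.comp hGmeas
          have hswap : (S.indicator fun ω => ENNReal.ofReal (G (X r ω)))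
              = fun ω => (A.indicator fun z => ENNReal.ofReal (G z)) (X r ω) := by
            funext ω
            by_cases hω : X r ω ∈ A
            · rw [Set.indicator_of_mem (by exact hω : ω ∈ S),
                Set.indicator_of_mem hω]
            · rw [Set.indicator_of_notMem (by exact hω : ω ∉ S),
                Set.indicator_of_notMem hω]
          rw [← lintegral_indicator hSmeas, hswap,
            ← lintegral_map (hGE.indicator hA) (hXt r), hμdef, hdens x r hr0,
            lintegral_withDensity_eq_lintegral_mul _
              (hOf r x) (hGE.indicator hA),
            ← lintegral_indicator hA]
          refine lintegral_congr fun z => ?_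
          by_cases hz : z ∈ A <;>
            simp [Set.indicator, hz]
        -- the density side
        have e3 : ρ (A ×ˢ B)
            = ∫⁻ z in A, ENNReal.ofReal (pt r x z) * ENNReal.ofReal (G z) := by
          rw [hρ, withDensity_apply _ (hA.prod hB), ← lintegral_indicator (hA.prod hB)]
          set F : EuclideanSpace ℝ (Fin d) × EuclideanSpace ℝ (Fin d) → ℝ≥0∞ := fun q =>
            (A.indicator fun z => ENNReal.ofReal (pt r x z)) q.1 *
              (ENNReal.ofReal (pt t q.1 q.2) * (B.indicator fun _ => (1:ℝ≥0∞)) q.2)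
            with hF
          have hFm : Measurable F := by
            refine Measurable.mul ?_ (Measurable.mul ?_ ?_)
            · exact ((ENNReal.measurable_ofReal.comp (hptm r x)).indicator hA).comp
                measurable_fst
            · exact ENNReal.measurable_ofReal.comp (hptm1 t)
            · exact (measurable_const.indicator hB).comp measurable_snd
          have hInd : (A ×ˢ B).indicator dens = F := by
            funext q
            by_cases h1 : q.1 ∈ A <;> by_cases h2 : q.2 ∈ B <;>
              simp [hF, hdensdef, Set.indicator, h1, h2, Set.mem_prod, mul_comm]
          rw [hInd, lintegral_prod _ hFm.aemeasurable]
          rw [← lintegral_indicator hA]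
          refine lintegral_congr fun z => ?_
          by_cases hz : z ∈ A
          · simp only [hF, Set.indicator_of_mem hz]
            rw [lintegral_const_mul (f := fun y => ENNReal.ofReal (pt t z y) * B.indicator (fun _ => (1:ℝ≥0∞)) y) _
              ((hOf t z).mul (measurable_const.indicator hB))]
            congr 1
            rw [hGofReal z, ← lintegral_indicator hB]
            refine lintegral_congr fun y => ?_
            by_cases hy : y ∈ B <;> simp [Set.indicator, hy]
          · simp [hF, Set.indicator_of_notMem hz]
        rw [e0, e1, e2, e3]
      -- measures agree
      have hνρ : ν = ρ := by
        refine ext_of_generate_finite _ generateFrom_prod.symm isPiSystem_prod ?_ ?_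
        · rintro _ ⟨A, hA, B, hB, rfl⟩
          exact hrect A B hA hB
        · have := hrect Set.univ Set.univ MeasurableSet.univ MeasurableSet.univ
          simpa [Set.univ_prod_univ] using this
      -- now compute
      have hΦ : Measurable fun q : EuclideanSpace ℝ (Fin d) × EuclideanSpace ℝ (Fin d) => ENNReal.ofReal (‖q.2 - q.1‖ ^ (γ * p)) :=
        ENNReal.measurable_ofReal.comp (hnormmeas.comp (measurable_snd.sub measurable_fst))
      have hinm : ∀ z : EuclideanSpace ℝ (Fin d), Measurable fun y : EuclideanSpace ℝ (Fin d) =>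
          ENNReal.ofReal (pt t z y) * ENNReal.ofReal (‖y - z‖ ^ (γ * p)) := fun z =>
        (ENNReal.measurable_ofReal.comp (hptm t z)).mul
          (ENNReal.measurable_ofReal.comp (hnormmeas.comp
            (measurable_id.sub measurable_const)))
      calc (∫⁻ ω, ENNReal.ofReal (‖X s ω - X r ω‖ ^ (γ * p)) ∂μ)
          = ∫⁻ q : EuclideanSpace ℝ (Fin d) × EuclideanSpace ℝ (Fin d), ENNReal.ofReal (‖q.2 - q.1‖ ^ (γ * p)) ∂ν :=
            (lintegral_map hΦ hpairm).symm
        _ = ∫⁻ q : EuclideanSpace ℝ (Fin d) × EuclideanSpace ℝ (Fin d), ENNReal.ofReal (‖q.2 - q.1‖ ^ (γ * p)) ∂ρ := by rw [hνρ]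
        _ = ∫⁻ q : EuclideanSpace ℝ (Fin d) × EuclideanSpace ℝ (Fin d), dens q * ENNReal.ofReal (‖q.2 - q.1‖ ^ (γ * p))
              ∂((volume : Measure (EuclideanSpace ℝ (Fin d))).prod volume) := by
            rw [hρ, lintegral_withDensity_eq_lintegral_mul _ hdensm hΦ]
            rfl
        _ = ∫⁻ z : EuclideanSpace ℝ (Fin d), ∫⁻ y : EuclideanSpace ℝ (Fin d), dens (z, y) * ENNReal.ofReal (‖y - z‖ ^ (γ * p)) :=
            lintegral_prod _ (hdensm.mul hΦ).aemeasurable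
        _ = ∫⁻ z : EuclideanSpace ℝ (Fin d), ENNReal.ofReal (pt r x z) *
              ∫⁻ y : EuclideanSpace ℝ (Fin d), ENNReal.ofReal (pt t z y) * ENNReal.ofReal (‖y - z‖ ^ (γ * p)) := by
            refine lintegral_congr fun z => ?_
            rw [← lintegral_const_mul _ (hinm z)]
            refine lintegral_congr fun y => ?_
            simp only [hdensdef]
            ring
        _ ≤ ∫⁻ z : EuclideanSpace ℝ (Fin d), ENNReal.ofReal (pt r x z) *
              ENNReal.ofReal (Cst * t ^ (γ * p / α) * I) :=
            lintegral_mono fun z => mul_le_mul_right (key z t ht htT) _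
        _ = (∫⁻ z : EuclideanSpace ℝ (Fin d), ENNReal.ofReal (pt r x z)) *
              ENNReal.ofReal (Cst * t ^ (γ * p / α) * I) :=
            lintegral_mul_const _ (hOf r x)
        _ = ENNReal.ofReal (Cst * (s - r) ^ (γ * p / α) * I) := by
            rw [hmass x r hr0, one_mul]
  -- final assembly
  have hfmeas : Measurable fun ω => |h (X s ω) - h (X r ω)| ^ p :=
    (Real.continuous_rpow_const hp0).measurable.comp
      (((hhmeas.comp (hXt s)).sub (hhmeas.comp (hXt r))).abs)
  have hpoint2 : ∀ a b : EuclideanSpace ℝ (Fin d), |h a - h b| ^ p ≤ Hγ ^ p * ‖a - b‖ ^ (γ * p) := by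
    intro a b
    have h1 : |h a - h b| ^ p ≤ (Hγ * ‖a - b‖ ^ γ) ^ p :=
      Real.rpow_le_rpow (abs_nonneg _) (hHγ a b) hp0
    calc |h a - h b| ^ p ≤ (Hγ * ‖a - b‖ ^ γ) ^ p := h1
      _ = Hγ ^ p * (‖a - b‖ ^ γ) ^ p :=
        Real.mul_rpow hHγ0 (Real.rpow_nonneg (norm_nonneg _) _)
      _ = Hγ ^ p * ‖a - b‖ ^ (γ * p) := by
        rw [← Real.rpow_mul (norm_nonneg _)]
  have hK0 : 0 ≤ Hγ ^ p * Cst * (s - r) ^ (γ * p / α) * I := by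
    have : (0:ℝ) ≤ Hγ ^ p := Real.rpow_nonneg hHγ0 _
    have h2 : (0:ℝ) ≤ (s - r) ^ (γ * p / α) := Real.rpow_nonneg (by linarith) _
    positivity
  rw [integral_eq_lintegral_of_nonneg_ae
    (Filter.Eventually.of_forall fun ω => Real.rpow_nonneg (abs_nonneg _) _)
    hfmeas.aestronglyMeasurable]
  refine ENNReal.toReal_le_of_le_ofReal hK0 ?_
  calc (∫⁻ ω, ENNReal.ofReal (|h (X s ω) - h (X r ω)| ^ p) ∂μ)
      ≤ ∫⁻ ω, ENNReal.ofReal (Hγ ^ p * ‖X s ω - X r ω‖ ^ (γ * p)) ∂μ :=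
        lintegral_mono fun ω => ENNReal.ofReal_le_ofReal (hpoint2 _ _)
    _ = ∫⁻ ω, ENNReal.ofReal (Hγ ^ p) * ENNReal.ofReal (‖X s ω - X r ω‖ ^ (γ * p)) ∂μ := by
        simp_rw [ENNReal.ofReal_mul (Real.rpow_nonneg hHγ0 p)]
    _ = ENNReal.ofReal (Hγ ^ p) * ∫⁻ ω, ENNReal.ofReal (‖X s ω - X r ω‖ ^ (γ * p)) ∂μ :=
        lintegral_const_mul _ hΦmeas
    _ ≤ ENNReal.ofReal (Hγ ^ p) * ENNReal.ofReal (Cst * (s - r) ^ (γ * p / α) * I) :=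
        mul_le_mul_right main _
    _ = ENNReal.ofReal (Hγ ^ p * Cst * (s - r) ^ (γ * p / α) * I) := by
        rw [← ENNReal.ofReal_mul (Real.rpow_nonneg hHγ0 p)]
        congr 1
        ring
end

section
/- Let T > 0, let δ : [0,T] → ℝ be integrable, and set f(t) = ∫_0^t δ(u) du for t ∈ [0,T]. Then for every real p ≥ 2, |f(T)|^p = p(p−1) ∫_0^T |f(s)|^{p−2} δ(s) ( ∫_s^T δ(t) dt ) ds. -/
open MeasureTheory Filter Topology Set intervalIntegral

private lemma cont_abs_rpow {q : ℝ} (hq : 0 ≤ q) : Continuous fun x : ℝ => |x| ^ q :=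
  continuous_abs.rpow_const (fun _ => Or.inr hq)

private lemma aux_hasDerivAt_abs_rpow {p : ℝ} (hp : 2 ≤ p) (x : ℝ) :
    HasDerivAt (fun y : ℝ => |y| ^ p) (p * |x| ^ (p - 2) * x) x := by
  have hp0 : p ≠ 0 := by linarith
  rcases lt_trichotomy x 0 with hx | hx | hx
  · have h1 : HasDerivAt (fun y : ℝ => (-y) ^ p) (p * (-x) ^ (p - 1) * (-1)) x := by
      exact (Real.hasDerivAt_rpow_const (p := p) (Or.inl (by linarith))).comp x (hasDerivAt_neg x)
    have h2 : (fun y : ℝ => (-y) ^ p) =ᶠ[nhds x] fun y => |y| ^ p := by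
      filter_upwards [eventually_lt_nhds hx] with y hy
      rw [abs_of_neg hy]
    have h3 := h1.congr_of_eventuallyEq h2.symm
    refine h3.congr_deriv ?_
    rw [abs_of_neg hx]
    rw [show p - 1 = (p - 2) + 1 by ring, Real.rpow_add_one (by linarith)]
    ring
  · subst hx
    have h0 : |(0:ℝ)| ^ p = 0 := by simp [Real.zero_rpow hp0]
    rw [hasDerivAt_iff_tendsto]
    simp only [abs_zero, Real.zero_rpow hp0, sub_zero, mul_zero, zero_mul, smul_eq_mul]
    have heq : (fun y : ℝ => ‖y‖⁻¹ * ‖|y| ^ p‖) = fun y => |y| ^ (p - 1) := by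
      funext y
      rw [Real.norm_eq_abs, Real.norm_eq_abs]
      rcases eq_or_ne y 0 with rfl | hy
      · simp [Real.zero_rpow (by linarith : p - 1 ≠ 0), Real.zero_rpow hp0]
      · rw [abs_of_nonneg (Real.rpow_nonneg (abs_nonneg y) p),
          Real.rpow_sub (abs_pos.2 hy), Real.rpow_one]
        field_simp
    rw [heq]
    have := (cont_abs_rpow (q := p - 1) (by linarith)).tendsto 0
    simpa [Real.zero_rpow (by linarith : p - 1 ≠ 0)] using this
  · have h1 : HasDerivAt (fun y : ℝ => y ^ p) (p * x ^ (p - 1)) x :=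
      Real.hasDerivAt_rpow_const (Or.inl hx.ne')
    have h2 : (fun y : ℝ => y ^ p) =ᶠ[nhds x] fun y => |y| ^ p := by
      filter_upwards [eventually_gt_nhds hx] with y hy
      rw [abs_of_pos hy]
    have h3 := h1.congr_of_eventuallyEq h2.symm
    refine h3.congr_deriv ?_
    rw [abs_of_pos hx, show p - 1 = (p - 2) + 1 by ring, Real.rpow_add_one hx.ne']
    ring

private lemma aux_hasDerivAt_abs_rpow_mul {p : ℝ} (hp : 2 ≤ p) (x : ℝ) :
    HasDerivAt (fun y : ℝ => |y| ^ (p - 2) * y) ((p - 1) * |x| ^ (p - 2)) x := by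
  rcases lt_trichotomy x 0 with hx | hx | hx
  · have h1 : HasDerivAt (fun y : ℝ => -((-y) ^ (p - 1)))
        (-((p - 1) * (-x) ^ (p - 2) * (-1))) x := by
      exact (((Real.hasDerivAt_rpow_const (p := p - 1)
        (Or.inl (by linarith : -x ≠ 0))).comp x (hasDerivAt_neg x)).neg).congr_deriv (by ring_nf)
    have h2 : (fun y : ℝ => -((-y) ^ (p - 1))) =ᶠ[nhds x] fun y => |y| ^ (p - 2) * y := by
      filter_upwards [eventually_lt_nhds hx] with y hy
      rw [abs_of_neg hy, show p - 1 = (p - 2) + 1 by ring,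
        Real.rpow_add_one (by linarith : -y ≠ 0)]
      ring
    have h3 := h1.congr_of_eventuallyEq h2.symm
    refine h3.congr_deriv ?_
    rw [abs_of_neg hx]
    ring
  · subst hx
    rcases eq_or_lt_of_le hp with hp2 | hp2
    · have : (fun y : ℝ => |y| ^ (p - 2) * y) = fun y => y := by
        funext y; rw [← hp2]; simp
      rw [this]
      have h := hasDerivAt_id (0:ℝ)
      refine h.congr_deriv ?_
      rw [← hp2]; norm_num
    · have hq : p - 2 ≠ 0 := by linarith
      rw [hasDerivAt_iff_tendsto]
      simp only [abs_zero, Real.zero_rpow hq, sub_zero, mul_zero, zero_mul, smul_eq_mul]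
      have heq : (fun y : ℝ => ‖y‖⁻¹ * ‖|y| ^ (p - 2) * y‖) = fun y => |y| ^ (p - 2) := by
        funext y
        rw [Real.norm_eq_abs, Real.norm_eq_abs]
        rcases eq_or_ne y 0 with rfl | hy
        · simp [Real.zero_rpow hq]
        · rw [abs_mul, abs_of_nonneg (Real.rpow_nonneg (abs_nonneg y) (p - 2))]
          rw [mul_comm (|y| ^ (p - 2)) |y|, ← mul_assoc, inv_mul_cancel₀ (abs_ne_zero.2 hy),
            one_mul]
      rw [heq]
      have := (cont_abs_rpow (q := p - 2) (by linarith)).tendsto 0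
      simpa [Real.zero_rpow hq] using this
  · have h1 : HasDerivAt (fun y : ℝ => y ^ (p - 1)) ((p - 1) * x ^ (p - 2)) x := by
      have := Real.hasDerivAt_rpow_const (p := p - 1) (Or.inl hx.ne')
      simpa [show p - 1 - 1 = p - 2 by ring] using this
    have h2 : (fun y : ℝ => y ^ (p - 1)) =ᶠ[nhds x] fun y => |y| ^ (p - 2) * y := by
      filter_upwards [eventually_gt_nhds hx] with y hy
      rw [abs_of_pos hy, show p - 1 = (p - 2) + 1 by ring, Real.rpow_add_one hy.ne']
    have h3 := h1.congr_of_eventuallyEq h2.symm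
    refine h3.congr_deriv ?_
    rw [abs_of_pos hx]

private lemma ftc_comp_cont (d : ℝ → ℝ) (hc : Continuous d) (g g' : ℝ → ℝ)
    (hg : ∀ x, HasDerivAt g (g' x) x) (hg' : Continuous g') (T : ℝ) :
    ∫ s in (0:ℝ)..T, g' (∫ u in (0:ℝ)..s, d u) * d s
      = g (∫ u in (0:ℝ)..T, d u) - g 0 := by
  set f : ℝ → ℝ := fun s => ∫ u in (0:ℝ)..s, d u with hfdef
  have hfd : ∀ s : ℝ, HasDerivAt f (d s) s := fun s =>
    intervalIntegral.integral_hasDerivAt_right (hc.intervalIntegrable _ _)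
      (hc.stronglyMeasurable.stronglyMeasurableAtFilter) hc.continuousAt
  have hfc : Continuous f := continuous_iff_continuousAt.2 fun s => (hfd s).continuousAt
  have key := intervalIntegral.integral_eq_sub_of_hasDerivAt
    (f := fun s => g (f s)) (f' := fun s => g' (f s) * d s) (a := 0) (b := T)
    (fun x _ => (hg (f x)).comp x (hfd x))
    (((hg'.comp hfc).mul hc).intervalIntegrable _ _)
  rw [key]
  simp [hfdef]

private lemma ftc_comp (d : ℝ → ℝ) (hd : Integrable d) (g g' : ℝ → ℝ)
    (hg : ∀ x, HasDerivAt g (g' x) x) (hg' : Continuous g') (T : ℝ) (hT : 0 ≤ T) :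
    ∫ s in (0:ℝ)..T, g' (∫ u in (0:ℝ)..s, d u) * d s
      = g (∫ u in (0:ℝ)..T, d u) - g 0 := by
  have H : ∀ n : ℕ, ∃ ee : ℝ → ℝ, Continuous ee ∧ Integrable ee ∧
      (∫ x, ‖d x - ee x‖) ≤ 1 / (n + 1) := by
    intro n
    obtain ⟨ee, _, h1, h2, h3⟩ := hd.exists_hasCompactSupport_integral_sub_le
      (by positivity : (0:ℝ) < 1 / (n + 1))
    exact ⟨ee, h2, h3, h1⟩
  choose e he_cont he_int he_close using H
  set f : ℝ → ℝ := fun s => ∫ u in (0:ℝ)..s, d u with hfdef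
  set F : ℕ → ℝ → ℝ := fun n s => ∫ u in (0:ℝ)..s, e n u with hFdef
  have hfc : Continuous f := hd.continuous_primitive 0
  have hFc : ∀ n, Continuous (F n) := fun n => (he_int n).continuous_primitive 0
  have hdiff_int : ∀ n, Integrable (fun u => e n u - d u) := fun n => (he_int n).sub hd
  have hdiff_close : ∀ n, (∫ x, ‖e n x - d x‖) ≤ 1 / (n + 1) := by
    intro n
    calc (∫ x, ‖e n x - d x‖) = ∫ x, ‖d x - e n x‖ := by simp_rw [norm_sub_rev]
      _ ≤ 1 / (n + 1) := he_close n
  have hdist : ∀ (n : ℕ) (s : ℝ), |F n s - f s| ≤ 1 / (n + 1) := by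
    intro n s
    have hsub : F n s - f s = ∫ u in (0:ℝ)..s, (e n u - d u) := by
      rw [intervalIntegral.integral_sub ((he_int n).intervalIntegrable)
        (hd.intervalIntegrable)]
    rw [hsub, ← Real.norm_eq_abs]
    calc ‖∫ u in (0:ℝ)..s, (e n u - d u)‖
        ≤ ∫ u in Set.uIoc (0:ℝ) s, ‖e n u - d u‖ :=
          intervalIntegral.norm_integral_le_integral_norm_uIoc
      _ ≤ ∫ u, ‖e n u - d u‖ := setIntegral_le_integral (hdiff_int n).norm
          (Eventually.of_forall fun x => norm_nonneg _)
      _ ≤ 1 / (n + 1) := hdiff_close n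
  have h1n : Tendsto (fun n : ℕ => 1 / ((n : ℝ) + 1)) atTop (𝓝 0) :=
    tendsto_one_div_add_atTop_nhds_zero_nat
  have hpt : ∀ s : ℝ, Tendsto (fun n => F n s) atTop (𝓝 (f s)) := by
    intro s
    rw [tendsto_iff_norm_sub_tendsto_zero]
    exact squeeze_zero (fun n => norm_nonneg _) (fun n => hdist n s) h1n
  set M : ℝ := ∫ u, ‖d u‖ with hM
  have hM0 : 0 ≤ M := integral_nonneg fun x => norm_nonneg _
  have hfM : ∀ s : ℝ, |f s| ≤ M := by
    intro s
    rw [← Real.norm_eq_abs]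
    calc ‖f s‖ ≤ ∫ u in Set.uIoc (0:ℝ) s, ‖d u‖ :=
          intervalIntegral.norm_integral_le_integral_norm_uIoc
      _ ≤ M := setIntegral_le_integral hd.norm (Eventually.of_forall fun x => norm_nonneg _)
  have hFM : ∀ n s, |F n s| ≤ M + 1 := by
    intro n s
    have h1 : 1 / ((n:ℝ) + 1) ≤ 1 := by
      rw [div_le_one (by positivity)]
      linarith [Nat.cast_nonneg (α := ℝ) n]
    have h2 : |F n s| ≤ |F n s - f s| + |f s| := by
      have := abs_add_le (F n s - f s) (f s)
      simpa using this
    linarith [hdist n s, hfM s]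
  obtain ⟨C, hC⟩ := (isCompact_Icc (a := -(M+1)) (b := M+1)).exists_bound_of_continuousOn
    hg'.continuousOn
  have hC0 : 0 ≤ C := le_trans (norm_nonneg (g' 0)) (hC 0 (by constructor <;> linarith))
  have hCF : ∀ n s, |g' (F n s)| ≤ C := by
    intro n s
    rw [← Real.norm_eq_abs]
    refine hC _ ?_
    have := hFM n s; rw [abs_le] at this
    exact ⟨this.1, this.2⟩
  have hIδ : IntervalIntegrable d volume 0 T := hd.intervalIntegrable
  have hIe : ∀ n, IntervalIntegrable (e n) volume 0 T := fun n => (he_int n).intervalIntegrable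
  have hInt1 : ∀ n, IntervalIntegrable (fun s => g' (F n s) * (e n s - d s)) volume 0 T :=
    fun n => ((hIe n).sub hIδ).continuousOn_mul ((hg'.comp (hFc n)).continuousOn)
  have hInt2 : ∀ n, IntervalIntegrable (fun s => g' (F n s) * d s) volume 0 T :=
    fun n => hIδ.continuousOn_mul ((hg'.comp (hFc n)).continuousOn)
  have hA : Tendsto (fun n => ∫ s in (0:ℝ)..T, g' (F n s) * (e n s - d s)) atTop (𝓝 0) := by
    apply squeeze_zero_norm (fun n => ?_) (show Tendsto (fun n : ℕ => C * (1 / (n + 1))) atTop (𝓝 0)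
      by simpa using h1n.const_mul C)
    calc ‖∫ s in (0:ℝ)..T, g' (F n s) * (e n s - d s)‖
        ≤ ∫ s in (0:ℝ)..T, ‖g' (F n s) * (e n s - d s)‖ :=
          intervalIntegral.norm_integral_le_integral_norm hT
      _ ≤ ∫ s in (0:ℝ)..T, C * ‖e n s - d s‖ := by
          apply intervalIntegral.integral_mono_on hT (hInt1 n).norm
            (((hIe n).sub hIδ).norm.const_mul C)
          intro x _
          rw [norm_mul]
          exact mul_le_mul_of_nonneg_right (by rw [Real.norm_eq_abs]; exact hCF n x)
            (norm_nonneg _)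
      _ = C * ∫ s in (0:ℝ)..T, ‖e n s - d s‖ := intervalIntegral.integral_const_mul _ _
      _ ≤ C * (1 / (n + 1)) := by
          apply mul_le_mul_of_nonneg_left _ hC0
          calc ∫ s in (0:ℝ)..T, ‖e n s - d s‖
              = ∫ s in Set.Ioc (0:ℝ) T, ‖e n s - d s‖ := intervalIntegral.integral_of_le hT
            _ ≤ ∫ s, ‖e n s - d s‖ := setIntegral_le_integral (hdiff_int n).norm
                (Eventually.of_forall fun x => norm_nonneg _)
            _ ≤ 1 / (n + 1) := hdiff_close n
  have hB : Tendsto (fun n => ∫ s in (0:ℝ)..T, g' (F n s) * d s) atTop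
      (𝓝 (∫ s in (0:ℝ)..T, g' (f s) * d s)) := by
    apply intervalIntegral.tendsto_integral_filter_of_dominated_convergence
      (bound := fun s => C * ‖d s‖)
    · exact Eventually.of_forall fun n =>
        ((hg'.comp (hFc n)).aestronglyMeasurable.mul
          (hd.aestronglyMeasurable.restrict))
    · refine Eventually.of_forall fun n => Eventually.of_forall fun s _ => ?_
      rw [norm_mul]
      exact mul_le_mul_of_nonneg_right (by rw [Real.norm_eq_abs]; exact hCF n s) (norm_nonneg _)
    · exact hIδ.norm.const_mul C
    · refine Eventually.of_forall fun s _ => ?_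
      exact (hg'.continuousAt.tendsto.comp (hpt s)).mul tendsto_const_nhds
  have hsplit : ∀ n, (∫ s in (0:ℝ)..T, g' (F n s) * e n s)
      = (∫ s in (0:ℝ)..T, g' (F n s) * (e n s - d s)) + ∫ s in (0:ℝ)..T, g' (F n s) * d s := by
    intro n
    rw [← intervalIntegral.integral_add (hInt1 n) (hInt2 n)]
    congr 1; funext s; ring
  have hconv : Tendsto (fun n => ∫ s in (0:ℝ)..T, g' (F n s) * e n s) atTop
      (𝓝 (∫ s in (0:ℝ)..T, g' (f s) * d s)) := by
    have := hA.add hB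
    rw [zero_add] at this
    exact this.congr (fun n => (hsplit n).symm)
  have heq : ∀ n, (∫ s in (0:ℝ)..T, g' (F n s) * e n s) = g (F n T) - g 0 :=
    fun n => ftc_comp_cont (e n) (he_cont n) g g' hg hg' T
  have hval : Tendsto (fun n => g (F n T) - g 0) atTop (𝓝 (g (f T) - g 0)) :=
    ((hg (f T)).continuousAt.tendsto.comp (hpt T)).sub tendsto_const_nhds
  exact tendsto_nhds_unique (hconv.congr heq) hval

theorem statement_8
    (T : ℝ) (hT : 0 < T) (δ : ℝ → ℝ)
    (hδ : IntegrableOn δ (Set.Icc 0 T))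
    (p : ℝ) (hp : 2 ≤ p) :
    |∫ u in (0:ℝ)..T, δ u| ^ p
      = p * (p - 1) * ∫ s in (0:ℝ)..T,
          |∫ u in (0:ℝ)..s, δ u| ^ (p - 2) * δ s * ∫ t in s..T, δ t := by
  have hp0 : p ≠ 0 := by linarith
  have hp1 : p - 1 ≠ 0 := by linarith
  have hq : (0:ℝ) ≤ p - 2 := by linarith
  set d : ℝ → ℝ := (Set.Icc (0:ℝ) T).indicator δ with hddef
  have hd : Integrable d := (integrable_indicator_iff measurableSet_Icc).2 hδ
  set f : ℝ → ℝ := fun s => ∫ u in (0:ℝ)..s, d u with hfdef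
  have hfc : Continuous f := hd.continuous_primitive 0
  have hsub : ∀ a b : ℝ, Set.uIcc a b ⊆ Set.Icc 0 T →
      (∫ u in a..b, δ u) = ∫ u in a..b, d u := by
    intro a b h
    apply intervalIntegral.integral_congr
    intro u hu
    exact (Set.indicator_of_mem (h hu) δ).symm
  -- rewrite main δ-integral as f T
  have hFT : (∫ u in (0:ℝ)..T, δ u) = f T := hsub 0 T (by rw [Set.uIcc_of_le hT.le])
  -- derivative setups
  have hg1' : Continuous fun x : ℝ => p * |x| ^ (p-2) * x :=
    (continuous_const.mul (cont_abs_rpow hq)).mul continuous_id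
  have hg2' : Continuous fun x : ℝ => (p-1) * |x| ^ (p-2) :=
    continuous_const.mul (cont_abs_rpow hq)
  have K1 := ftc_comp d hd (fun y => |y| ^ p) (fun x => p * |x| ^ (p-2) * x)
    (aux_hasDerivAt_abs_rpow hp) hg1' T hT.le
  have K2 := ftc_comp d hd (fun y => |y| ^ (p-2) * y) (fun x => (p-1) * |x| ^ (p-2))
    (aux_hasDerivAt_abs_rpow_mul hp) hg2' T hT.le
  simp only [abs_zero, Real.zero_rpow hp0, sub_zero, mul_zero] at K1 K2
  -- integrability
  have hIδ : IntervalIntegrable d volume 0 T := hd.intervalIntegrable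
  have hI2int : IntervalIntegrable (fun s => |f s| ^ (p-2) * d s) volume 0 T :=
    hIδ.continuousOn_mul (((cont_abs_rpow hq).comp hfc).continuousOn)
  have hI1int : IntervalIntegrable (fun s => |f s| ^ (p-2) * f s * d s) volume 0 T :=
    hIδ.continuousOn_mul ((((cont_abs_rpow hq).comp hfc).mul hfc).continuousOn)
  -- pull constants out
  have hK1 : p * ∫ s in (0:ℝ)..T, |f s| ^ (p-2) * f s * d s = |f T| ^ p := by
    rw [← intervalIntegral.integral_const_mul, ← K1]
    congr 1; funext s; ring
  have hK2 : (p - 1) * ∫ s in (0:ℝ)..T, |f s| ^ (p-2) * d s = |f T| ^ (p-2) * f T := by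
    rw [← intervalIntegral.integral_const_mul, ← K2]
    congr 1; funext s; ring
  -- rewrite the goal integral
  have hgoal_int : (∫ s in (0:ℝ)..T,
        |∫ u in (0:ℝ)..s, δ u| ^ (p - 2) * δ s * ∫ t in s..T, δ t)
      = ∫ s in (0:ℝ)..T, |f s| ^ (p-2) * d s * (f T - f s) := by
    apply intervalIntegral.integral_congr
    intro s hs
    rw [Set.uIcc_of_le hT.le] at hs
    have h1 : (∫ u in (0:ℝ)..s, δ u) = f s :=
      hsub 0 s (by rw [Set.uIcc_of_le hs.1]; exact Set.Icc_subset_Icc le_rfl hs.2)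
    have h2 : δ s = d s := (Set.indicator_of_mem hs δ).symm
    have h3 : (∫ t in s..T, δ t) = f T - f s := by
      rw [hsub s T (by rw [Set.uIcc_of_le hs.2]; exact Set.Icc_subset_Icc hs.1 le_rfl)]
      rw [← intervalIntegral.integral_interval_sub_left hd.intervalIntegrable
        hd.intervalIntegrable]
    simp only [h1, h2, h3]
  rw [hFT, hgoal_int]
  -- split the integral
  have hsplit : (∫ s in (0:ℝ)..T, |f s| ^ (p-2) * d s * (f T - f s))
      = f T * (∫ s in (0:ℝ)..T, |f s| ^ (p-2) * d s)
        - ∫ s in (0:ℝ)..T, |f s| ^ (p-2) * f s * d s := by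
    rw [← intervalIntegral.integral_const_mul,
      ← intervalIntegral.integral_sub (hI2int.const_mul _) hI1int]
    congr 1; funext s; ring
  rw [hsplit]
  -- final algebra
  have hsq : (f T) ^ 2 * |f T| ^ (p-2) = |f T| ^ p := by
    rcases eq_or_ne (f T) 0 with h0 | h0
    · rw [h0]; simp [Real.zero_rpow hp0]
    · rw [← sq_abs, ← Real.rpow_two, ← Real.rpow_add (abs_pos.2 h0)]
      norm_num
  linear_combination (p - 1) * hK1 - p * (f T) * hK2 - p * hsq
end

section
/- Let X and H1 hold, let the process be Markov with respect to its natural filtration, and let p ≥ 2 satisfy ∫_{ℝ^d} V^p(T^{1/α}|y|) Q(y) dy < ∞. Then for all 0 ≤ r ≤ s ≤ t ≤ T and every x ∈ ℝ^d, E_x [ |h(X_s) − h(X_r)|^{p/2} |h(X_t) − h(X_r)|^{p/2} ] ≤ 2^{p−1} ‖h‖_V^p V^p(|x|) · max{ 1, C_T ∫_{ℝ^d} Q(y) V^p(T^{1/α}|y|) dy } · 2. -/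
open MeasureTheory

lemma my_add_rpow_le (a b : ℝ) (ha : 0 ≤ a) (hb : 0 ≤ b) {p : ℝ} (hp : 1 ≤ p) :
    (a + b) ^ p ≤ 2 ^ (p - 1) * (a ^ p + b ^ p) := by
  have H := NNReal.rpow_add_le_mul_rpow_add_rpow a.toNNReal b.toNNReal hp
  have H2 := NNReal.coe_le_coe.2 H
  push_cast [NNReal.coe_rpow, Real.coe_toNNReal a ha, Real.coe_toNNReal b hb] at H2
  exact H2

lemma my_amgm (a b : ℝ) (ha : 0 ≤ a) (hb : 0 ≤ b) {p : ℝ} (hp : 0 < p) :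
    a ^ (p/2) * b ^ (p/2) ≤ (a ^ p + b ^ p) / 2 := by
  have h1 : (a ^ (p/2)) ^ (2:ℕ) = a ^ p := by
    rw [← Real.rpow_natCast (a ^ (p/2)) 2, ← Real.rpow_mul ha]
    norm_num
  have h2 : (b ^ (p/2)) ^ (2:ℕ) = b ^ p := by
    rw [← Real.rpow_natCast (b ^ (p/2)) 2, ← Real.rpow_mul hb]
    norm_num
  nlinarith [sq_nonneg (a ^ (p/2) - b ^ (p/2))]


theorem statement_12
    {d : ℕ} {Ω : Type} [MeasurableSpace Ω]
    (X : ℝ → Ω → EuclideanSpace ℝ (Fin d))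
    (P : EuclideanSpace ℝ (Fin d) → Measure Ω)
    (hP : ∀ x, IsProbabilityMeasure (P x))
    (hXmeas : Measurable (Function.uncurry X))
    (hX0 : ∀ x, ∀ᵐ ω ∂ P x, X 0 ω = x)
    (T Cst α : ℝ) (hT : 0 < T) (hCst : 0 < Cst) (hα : α ∈ Set.Ioc (0:ℝ) 2)
    (Q : EuclideanSpace ℝ (Fin d) → ℝ)
    (hQmeas : Measurable Q) (hQnn : ∀ y, 0 ≤ Q y) (hQone : (∫ y, Q y) = 1)
    (pt pt' : ℝ → EuclideanSpace ℝ (Fin d) → EuclideanSpace ℝ (Fin d) → ℝ)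
    (hptmeas : Measurable (fun q : ℝ × EuclideanSpace ℝ (Fin d) × EuclideanSpace ℝ (Fin d) => pt q.1 q.2.1 q.2.2))
    (hpt'meas : Measurable (fun q : ℝ × EuclideanSpace ℝ (Fin d) × EuclideanSpace ℝ (Fin d) => pt' q.1 q.2.1 q.2.2))
    (hptnn : ∀ t x y, 0 < t → 0 ≤ pt t x y)
    (hptderiv : ∀ x y t, 0 < t → HasDerivAt (fun s => pt s x y) (pt' t x y) t)
    (hptbound : ∀ x y t, 0 < t → t ≤ T →
      pt t x y ≤ Cst * t ^ (-(d:ℝ)/α) * Q ((t ^ (-1/α)) • (x - y)))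
    (hpt'bound : ∀ x y t, 0 < t → t ≤ T →
      |pt' t x y| ≤ Cst * t ^ (-1 - (d:ℝ)/α) * Q ((t ^ (-1/α)) • (x - y)))
    (hdens : ∀ x t, 0 < t →
      Measure.map (X t) (P x)
        = (volume : Measure (EuclideanSpace ℝ (Fin d))).withDensity
            (fun y => ENNReal.ofReal (pt t x y)))
    (hMarkov : ∀ (x : EuclideanSpace ℝ (Fin d)) (u v : ℝ),
      ∀ g : EuclideanSpace ℝ (Fin d) → ℝ, Measurable g → (∃ M, ∀ y, |g y| ≤ M) →
      0 ≤ u → 0 < v →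
      (P x)[(fun ω => g (X (u + v) ω)) | natFiltration X u]
        =ᵐ[P x] (fun ω => ∫ y, pt v (X u ω) y * g y))
    (V : ℝ → ℝ) (hVmeas : Measurable V)
    (hV1 : ∀ r, 0 ≤ r → 1 ≤ V r)
    (hVmono : ∀ r₁ r₂, 0 ≤ r₁ → r₁ ≤ r₂ → V r₁ ≤ V r₂)
    (hVsub : ∀ r₁ r₂, 0 ≤ r₁ → 0 ≤ r₂ → V (r₁ + r₂) ≤ V r₁ * V r₂)
    (hVQint : ∀ S : ℝ, 0 ≤ S → Integrable (fun y : EuclideanSpace ℝ (Fin d) => V (S * ‖y‖) * Q y))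
    (h : EuclideanSpace ℝ (Fin d) → ℝ) (hhmeas : Measurable h)
    (Mh : ℝ) (hMh0 : 0 ≤ Mh) (hMh : ∀ y, |h y| ≤ Mh * V ‖y‖)
    (p : ℝ) (hp : 2 ≤ p)
    (hVpQ : Integrable (fun y : EuclideanSpace ℝ (Fin d) => (V (T ^ (1/α) * ‖y‖)) ^ p * Q y)) :
    ∀ (x : EuclideanSpace ℝ (Fin d)) (r s t : ℝ), 0 ≤ r → r ≤ s → s ≤ t → t ≤ T →
      (∫ ω, |h (X s ω) - h (X r ω)| ^ (p/2) * |h (X t ω) - h (X r ω)| ^ (p/2) ∂ P x)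
        ≤ (2:ℝ) ^ (p - 1) * Mh ^ p * (V ‖x‖) ^ p
            * max 1 (Cst * ∫ y, Q y * (V (T ^ (1/α) * ‖y‖)) ^ p) * 2 := by
  intro x r s t hr hrs hst htT
  have hp1 : (1:ℝ) ≤ p := le_trans one_le_two hp
  have hp0 : (0:ℝ) < p := lt_of_lt_of_le two_pos hp
  have hα0 : (0:ℝ) < α := hα.1
  have hS0 : (0:ℝ) ≤ T ^ (1/α) := Real.rpow_nonneg hT.le _
  have hVnn : ∀ u : ℝ, 0 ≤ u → 0 ≤ V u := fun u hu => le_trans zero_le_one (hV1 u hu)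
  set φ : EuclideanSpace ℝ (Fin d) → ℝ := fun y => |h y| ^ p with hφdef
  have hφmeas : Measurable φ :=
    ((Real.continuous_rpow_const hp0.le).measurable).comp hhmeas.abs
  have hφnn : ∀ y, 0 ≤ φ y := fun y => Real.rpow_nonneg (abs_nonneg _) _
  set g0 : EuclideanSpace ℝ (Fin d) → ℝ :=
    fun z => Q z * (V (T ^ (1/α) * ‖z‖)) ^ p with hg0def
  have hg0int : Integrable g0 :=
    hVpQ.congr (Filter.Eventually.of_forall fun y => mul_comm _ _)
  have hg0nn : ∀ z, 0 ≤ g0 z := fun z =>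
    mul_nonneg (hQnn z) (Real.rpow_nonneg (hVnn _ (mul_nonneg hS0 (norm_nonneg _))) _)
  have hK0 : 0 ≤ ∫ z, g0 z := integral_nonneg hg0nn
  have hVxnn : 0 ≤ V ‖x‖ := hVnn _ (norm_nonneg x)
  set A : ℝ := Mh ^ p * (V ‖x‖) ^ p * max 1 (Cst * ∫ z, g0 z) with hAdef
  have hMVnn : 0 ≤ Mh ^ p * (V ‖x‖) ^ p :=
    mul_nonneg (Real.rpow_nonneg hMh0 _) (Real.rpow_nonneg hVxnn _)
  have hA0 : 0 ≤ A := mul_nonneg hMVnn (le_trans zero_le_one (le_max_left _ _))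
  have hXu : ∀ u : ℝ, Measurable (X u) := fun u =>
    hXmeas.comp (Measurable.prodMk measurable_const measurable_id)
  -- key estimate for a single time
  have key : ∀ u : ℝ, 0 ≤ u → u ≤ T →
      Integrable (fun ω => φ (X u ω)) (P x) ∧ (∫ ω, φ (X u ω) ∂ P x) ≤ A := by
    intro u hu huT
    rcases eq_or_lt_of_le hu with hu0 | hu0
    · -- u = 0
      obtain rfl : u = 0 := hu0.symm
      have hx0 := hX0 x
      have hcongr : (fun _ : Ω => φ x) =ᵐ[P x] fun ω => φ (X 0 ω) := by
        filter_upwards [hx0] with ω hω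
        rw [hω]
      have hP' := hP x
      constructor
      · exact (integrable_const (φ x)).congr hcongr
      · have hint : (∫ ω, φ (X 0 ω) ∂ P x) = φ x := by
          rw [← integral_congr_ae hcongr, integral_const, probReal_univ]
          simp
        rw [hint]
        have h1 : φ x ≤ (Mh * V ‖x‖) ^ p :=
          Real.rpow_le_rpow (abs_nonneg _) (hMh x) hp0.le
        have h2 : (Mh * V ‖x‖) ^ p = Mh ^ p * (V ‖x‖) ^ p := Real.mul_rpow hMh0 hVxnn
        calc φ x ≤ Mh ^ p * (V ‖x‖) ^ p := by rw [← h2]; exact h1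
          _ ≤ A := le_mul_of_one_le_right hMVnn (le_max_left _ _)
    · -- u > 0
      set c : ℝ := u ^ (-1/α) with hcdef
      have hc0 : 0 < c := Real.rpow_pos_of_pos hu0 _
      have hcc : u ^ (1/α) * c = 1 := by
        rw [hcdef, ← Real.rpow_add hu0, show 1/α + (-1/α) = 0 by ring, Real.rpow_zero]
      have huT' : u ^ (1/α) ≤ T ^ (1/α) :=
        Real.rpow_le_rpow hu0.le huT (by positivity)
      have hptuxmeas : Measurable (fun y => pt u x y) :=
        hptmeas.comp (Measurable.prodMk measurable_const
          (Measurable.prodMk measurable_const measurable_id))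
      set CC : ℝ := Cst * u ^ (-(d:ℝ)/α) * (Mh ^ p * (V ‖x‖) ^ p) with hCCdef
      -- pointwise bound
      have hptφle : ∀ y, pt u x y * φ y ≤ CC * g0 (c • (x - y)) := by
        intro y
        set z := c • (x - y) with hzdef
        have hzn : ‖z‖ = c * ‖x - y‖ := by
          rw [hzdef, norm_smul, Real.norm_eq_abs, abs_of_pos hc0]
        have hyx : ‖y - x‖ ≤ T ^ (1/α) * ‖z‖ := by
          have h1 : ‖y - x‖ = u ^ (1/α) * ‖z‖ := by
            rw [hzn, norm_sub_rev y x, ← mul_assoc, hcc, one_mul]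
          rw [h1]
          exact mul_le_mul_of_nonneg_right huT' (norm_nonneg _)
        have hVy : V ‖y‖ ≤ V ‖x‖ * V (T ^ (1/α) * ‖z‖) := by
          have hn1 : ‖y‖ ≤ ‖x‖ + ‖y - x‖ := by
            have := norm_add_le x (y - x)
            simpa using this
          calc V ‖y‖ ≤ V (‖x‖ + ‖y - x‖) := hVmono _ _ (norm_nonneg _) hn1
            _ ≤ V ‖x‖ * V ‖y - x‖ := hVsub _ _ (norm_nonneg _) (norm_nonneg _)
            _ ≤ V ‖x‖ * V (T ^ (1/α) * ‖z‖) :=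
                mul_le_mul_of_nonneg_left (hVmono _ _ (norm_nonneg _) hyx) hVxnn
        have hφy : φ y ≤ Mh ^ p * ((V ‖x‖) ^ p * (V (T ^ (1/α) * ‖z‖)) ^ p) := by
          have h1 : |h y| ≤ Mh * (V ‖x‖ * V (T ^ (1/α) * ‖z‖)) :=
            le_trans (hMh y) (mul_le_mul_of_nonneg_left hVy hMh0)
          have h2 : φ y ≤ (Mh * (V ‖x‖ * V (T ^ (1/α) * ‖z‖))) ^ p :=
            Real.rpow_le_rpow (abs_nonneg _) h1 hp0.le
          have hVz : 0 ≤ V (T ^ (1/α) * ‖z‖) := hVnn _ (mul_nonneg hS0 (norm_nonneg _))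
          rw [Real.mul_rpow hMh0 (mul_nonneg hVxnn hVz), Real.mul_rpow hVxnn hVz] at h2
          exact h2
        have hpt : pt u x y ≤ Cst * u ^ (-(d:ℝ)/α) * Q z := hptbound x y u hu0 huT
        have hRnn : 0 ≤ Cst * u ^ (-(d:ℝ)/α) * Q z :=
          mul_nonneg (mul_nonneg hCst.le (Real.rpow_nonneg hu0.le _)) (hQnn z)
        calc pt u x y * φ y
            ≤ (Cst * u ^ (-(d:ℝ)/α) * Q z) *
              (Mh ^ p * ((V ‖x‖) ^ p * (V (T ^ (1/α) * ‖z‖)) ^ p)) :=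
              mul_le_mul hpt hφy (hφnn y) hRnn
          _ = CC * g0 z := by rw [hCCdef, hg0def]; ring
      -- integrability of the bound
      have hg1 : Integrable (fun w : EuclideanSpace ℝ (Fin d) => g0 (c • w)) :=
        hg0int.comp_smul hc0.ne'
      have hg2 : Integrable (fun y : EuclideanSpace ℝ (Fin d) => g0 (c • (x - y))) :=
        hg1.comp_sub_left x
      have hGint : Integrable (fun y : EuclideanSpace ℝ (Fin d) => CC * g0 (c • (x - y))) :=
        hg2.const_mul CC
      -- value of the integral of the bound
      have hcd : (c ^ d)⁻¹ = u ^ ((d:ℝ)/α) := by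
        have h1 : c ^ d = u ^ (-((d:ℝ)/α)) := by
          rw [← Real.rpow_natCast c d, hcdef, ← Real.rpow_mul hu0.le]
          congr 1
          push_cast
          ring
        rw [h1, ← Real.rpow_neg hu0.le, neg_neg]
      have hGval : (∫ y, CC * g0 (c • (x - y))) = Mh ^ p * (V ‖x‖) ^ p * (Cst * ∫ z, g0 z) := by
        rw [integral_const_mul _ _]
        have h1 : (∫ y, g0 (c • (x - y))) = ∫ w, g0 (c • w) :=
          integral_sub_left_eq_self (fun w => g0 (c • w)) volume x
        have h2 : (∫ w, g0 (c • w)) = (c ^ d)⁻¹ • ∫ z, g0 z := by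
          rw [Measure.integral_comp_smul_of_nonneg volume g0 c (hR := hc0.le), finrank_euclideanSpace_fin]
        rw [h1, h2, hcd, smul_eq_mul, hCCdef]
        have h3 : u ^ (-(d:ℝ)/α) * u ^ ((d:ℝ)/α) = 1 := by
          rw [← Real.rpow_add hu0, show -(d:ℝ)/α + (d:ℝ)/α = 0 by ring, Real.rpow_zero]
        calc Cst * u ^ (-(d:ℝ)/α) * (Mh ^ p * (V ‖x‖) ^ p) * (u ^ ((d:ℝ)/α) * ∫ z, g0 z)
            = (u ^ (-(d:ℝ)/α) * u ^ ((d:ℝ)/α)) * (Cst * (Mh ^ p * (V ‖x‖) ^ p) * ∫ z, g0 z) := by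
              ring
          _ = Mh ^ p * (V ‖x‖) ^ p * (Cst * ∫ z, g0 z) := by rw [h3]; ring
      -- transfer to P x
      have hmap := hdens x u hu0
      have hρmeas : Measurable (fun y => (pt u x y).toNNReal) := hptuxmeas.real_toNNReal
      have hsmul_eq : (fun y => (pt u x y).toNNReal • φ y) = fun y => pt u x y * φ y := by
        funext y
        rw [NNReal.smul_def, smul_eq_mul, Real.coe_toNNReal _ (hptnn u x y hu0)]
      have hwd : (fun y => ENNReal.ofReal (pt u x y))
          = fun y => ((pt u x y).toNNReal : ENNReal) := rfl
      have hptφint : Integrable (fun y => pt u x y * φ y) := by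
        refine hGint.mono' ((hptuxmeas.mul hφmeas).aestronglyMeasurable)
          (Filter.Eventually.of_forall fun y => ?_)
        rw [Real.norm_eq_abs, abs_of_nonneg (mul_nonneg (hptnn u x y hu0) (hφnn y))]
        exact hptφle y
      have hmapint : Integrable φ (Measure.map (X u) (P x)) := by
        rw [hmap, hwd, integrable_withDensity_iff_integrable_smul hρmeas, hsmul_eq]
        exact hptφint
      have hint : Integrable (fun ω => φ (X u ω)) (P x) :=
        (integrable_map_measure hφmeas.aestronglyMeasurable (hXu u).aemeasurable).mp hmapint
      have hinteq : (∫ ω, φ (X u ω) ∂ P x) = ∫ y, pt u x y * φ y := by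
        rw [← integral_map (hXu u).aemeasurable hφmeas.aestronglyMeasurable, hmap, hwd,
          integral_withDensity_eq_integral_smul hρmeas, hsmul_eq]
      refine ⟨hint, ?_⟩
      rw [hinteq]
      calc (∫ y, pt u x y * φ y) ≤ ∫ y, CC * g0 (c • (x - y)) :=
            integral_mono hptφint hGint hptφle
        _ = Mh ^ p * (V ‖x‖) ^ p * (Cst * ∫ z, g0 z) := hGval
        _ ≤ A := mul_le_mul_of_nonneg_left (le_max_right _ _) hMVnn
  -- apply at the three times
  have hsT : s ≤ T := le_trans hst htT
  have hrT : r ≤ T := le_trans hrs hsT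
  have hs0 : 0 ≤ s := le_trans hr hrs
  have ht0 : 0 ≤ t := le_trans hs0 hst
  obtain ⟨hir, hIr⟩ := key r hr hrT
  obtain ⟨his, hIs⟩ := key s hs0 hsT
  obtain ⟨hit, hIt⟩ := key t ht0 htT
  -- pointwise bound of the integrand
  set B : Ω → ℝ := fun ω => 2 ^ (p - 2) * (φ (X s ω) + φ (X t ω) + 2 * φ (X r ω)) with hBdef
  have hBint : Integrable B (P x) :=
    (((his.add hit).add (hir.const_mul 2)).const_mul _)
  have hpb : ∀ ω, |h (X s ω) - h (X r ω)| ^ (p/2) * |h (X t ω) - h (X r ω)| ^ (p/2) ≤ B ω := by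
    intro ω
    set a := |h (X s ω) - h (X r ω)| with hadef
    set b := |h (X t ω) - h (X r ω)| with hbdef
    have ha0 : 0 ≤ a := abs_nonneg _
    have hb0 : 0 ≤ b := abs_nonneg _
    have h1 : a ^ (p/2) * b ^ (p/2) ≤ (a ^ p + b ^ p) / 2 := my_amgm a b ha0 hb0 hp0
    have h2 : a ^ p ≤ 2 ^ (p - 1) * (φ (X s ω) + φ (X r ω)) := by
      have hle : a ≤ |h (X s ω)| + |h (X r ω)| := abs_sub _ _
      calc a ^ p ≤ (|h (X s ω)| + |h (X r ω)|) ^ p :=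
            Real.rpow_le_rpow ha0 hle hp0.le
        _ ≤ 2 ^ (p - 1) * (φ (X s ω) + φ (X r ω)) :=
            my_add_rpow_le _ _ (abs_nonneg _) (abs_nonneg _) hp1
    have h3 : b ^ p ≤ 2 ^ (p - 1) * (φ (X t ω) + φ (X r ω)) := by
      have hle : b ≤ |h (X t ω)| + |h (X r ω)| := abs_sub _ _
      calc b ^ p ≤ (|h (X t ω)| + |h (X r ω)|) ^ p :=
            Real.rpow_le_rpow hb0 hle hp0.le
        _ ≤ 2 ^ (p - 1) * (φ (X t ω) + φ (X r ω)) :=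
            my_add_rpow_le _ _ (abs_nonneg _) (abs_nonneg _) hp1
    have h4 : (2:ℝ) ^ (p - 1) = 2 * 2 ^ (p - 2) := by
      rw [show p - 1 = 1 + (p - 2) by ring, Real.rpow_add two_pos, Real.rpow_one]
    rw [hBdef]
    simp only []
    rw [h4] at h2 h3
    linarith
  -- conclusion
  have hfb : (∫ ω, |h (X s ω) - h (X r ω)| ^ (p/2) * |h (X t ω) - h (X r ω)| ^ (p/2) ∂ P x)
      ≤ ∫ ω, B ω ∂ P x := by
    refine integral_mono_of_nonneg (Filter.Eventually.of_forall fun ω => ?_) hBint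
      (Filter.Eventually.of_forall hpb)
    exact mul_nonneg (Real.rpow_nonneg (abs_nonneg _) _) (Real.rpow_nonneg (abs_nonneg _) _)
  have hBval : (∫ ω, B ω ∂ P x)
      = 2 ^ (p - 2) * ((∫ ω, φ (X s ω) ∂ P x) + (∫ ω, φ (X t ω) ∂ P x)
          + 2 * ∫ ω, φ (X r ω) ∂ P x) := by
    rw [hBdef]
    rw [integral_const_mul _ _]
    have e1 := integral_add (μ := P x) (his.add hit) (hir.const_mul 2)
    have e2 := integral_add (μ := P x) his hit
    simp only [Pi.add_apply] at e1
    rw [e1, e2, integral_const_mul _ _]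
  have hBle : (∫ ω, B ω ∂ P x) ≤ 2 ^ (p - 2) * (4 * A) := by
    rw [hBval]
    have h20 : (0:ℝ) ≤ 2 ^ (p - 2) := Real.rpow_nonneg two_pos.le _
    have : (∫ ω, φ (X s ω) ∂ P x) + (∫ ω, φ (X t ω) ∂ P x) + 2 * ∫ ω, φ (X r ω) ∂ P x
        ≤ 4 * A := by linarith
    exact mul_le_mul_of_nonneg_left this h20
  have hfinal : (2:ℝ) ^ (p - 2) * (4 * A)
      = 2 ^ (p - 1) * Mh ^ p * (V ‖x‖) ^ p * max 1 (Cst * ∫ z, g0 z) * 2 := by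
    have h4 : (2:ℝ) ^ (p - 1) = 2 * 2 ^ (p - 2) := by
      rw [show p - 1 = 1 + (p - 2) by ring, Real.rpow_add two_pos, Real.rpow_one]
    rw [h4, hAdef]
    ring
  calc (∫ ω, |h (X s ω) - h (X r ω)| ^ (p/2) * |h (X t ω) - h (X r ω)| ^ (p/2) ∂ P x)
      ≤ ∫ ω, B ω ∂ P x := hfb
    _ ≤ 2 ^ (p - 2) * (4 * A) := hBle
    _ = 2 ^ (p - 1) * Mh ^ p * (V ‖x‖) ^ p * max 1 (Cst * ∫ z, g0 z) * 2 := hfinal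
end
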